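/- arXiv:1610.06474 — 5 statements merged into one kernel-verified Lean document; each statement's English description precedes it below -/
import Mathlib

section
/- Let $\nu$ be a Borel probability measure on $\mathbb{R}^d$, let $r>0$ and let $\lambda_1,\dots,\lambda_d, M \geq 1$. Then the $\nu$-measure of the set of points $x \in \mathbb{R}^d$ such that $\nu(D(x,\lambda_1 r,\dots,\lambda_d r)) \geq M\,\nu(D(x,r))$ is at most $4^d M^{-1} \lambda_1 \cdots \lambda_d$. -/
open MeasureTheory Set
open scoped ENNReal NNReal

theorem stmt0 {d : ℕ} (ν : Measure (Fin d → ℝ)) [IsProbabilityMeasure ν]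
    (r : ℝ) (hr : 0 < r) (lam : Fin d → ℝ) (hlam : ∀ i, 1 ≤ lam i)
    (M : ℝ) (hM : 1 ≤ M) :
    ν {x | ENNReal.ofReal M * ν (univ.pi fun i => Icc (x i - r) (x i + r)) ≤
        ν (univ.pi fun i => Icc (x i - lam i * r) (x i + lam i * r))} ≤
      ENNReal.ofReal (4 ^ d * M⁻¹ * ∏ i, lam i) := by
  classical
  set A : Set (Fin d → ℝ) :=
    {x | ENNReal.ofReal M * ν (univ.pi fun i => Icc (x i - r) (x i + r)) ≤
        ν (univ.pi fun i => Icc (x i - lam i * r) (x i + lam i * r))} with hA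
  set Q : (Fin d → ℤ) → Set (Fin d → ℝ) := fun n =>
    univ.pi fun i => Ico ((n i : ℝ) * r) (((n i : ℝ) + 1) * r) with hQ
  set Dl : (Fin d → ℝ) → Set (Fin d → ℝ) := fun x =>
    univ.pi fun i => Icc (x i - lam i * r) (x i + lam i * r) with hDl
  set B : (Fin d → ℤ) → Set (Fin d → ℝ) := fun n =>
    if h : (A ∩ Q n).Nonempty then Dl h.choose else ∅ with hB
  have hMpos : (0:ℝ) < M := lt_of_lt_of_le one_pos hM
  have hM0 : ENNReal.ofReal M ≠ 0 := by
    simp [ENNReal.ofReal_eq_zero, not_le, hMpos]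
  have hDlmeas : ∀ x, MeasurableSet (Dl x) := fun x =>
    MeasurableSet.univ_pi fun i => measurableSet_Icc
  have hBmeas : ∀ n, MeasurableSet (B n) := by
    intro n
    have hBn : B n = if h : (A ∩ Q n).Nonempty then Dl h.choose else ∅ := rfl
    rw [hBn]
    split
    · exact hDlmeas _
    · exact MeasurableSet.empty
  -- Step 1: covering by grid cubes
  have hcover : A ⊆ ⋃ n, A ∩ Q n := by
    intro a ha
    refine mem_iUnion.2 ⟨fun i => ⌊a i / r⌋, ha, ?_⟩
    intro i _
    constructor
    · calc (⌊a i / r⌋ : ℝ) * r ≤ (a i / r) * r :=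
            mul_le_mul_of_nonneg_right (Int.floor_le _) hr.le
        _ = a i := div_mul_cancel₀ _ hr.ne'
    · calc a i = (a i / r) * r := (div_mul_cancel₀ _ hr.ne').symm
        _ < ((⌊a i / r⌋ : ℝ) + 1) * r :=
            mul_lt_mul_of_pos_right (Int.lt_floor_add_one _) hr
  have step1 : ν A ≤ ∑' n, ν (A ∩ Q n) :=
    (measure_mono hcover).trans (measure_iUnion_le _)
  -- Step 2: per-cube bound
  have step2 : ∀ n, ν (A ∩ Q n) ≤ ν (B n) / ENNReal.ofReal M := by
    intro n
    by_cases h : (A ∩ Q n).Nonempty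
    · have hBn : B n = Dl h.choose := dif_pos h
      obtain ⟨hxA, hxQ⟩ := h.choose_spec
      set x := h.choose
      have hsub : A ∩ Q n ⊆ univ.pi fun i => Icc (x i - r) (x i + r) := by
        intro y hy
        have hyQ := hy.2
        intro i _
        have h1 := hyQ i (mem_univ i)
        have h2 := hxQ i (mem_univ i)
        simp only [mem_Ico] at h1 h2
        constructor
        · nlinarith [h1.1, h2.2]
        · nlinarith [h1.2, h2.1]
      have hle : ν (A ∩ Q n) ≤ ν (univ.pi fun i => Icc (x i - r) (x i + r)) :=
        measure_mono hsub
      rw [ENNReal.le_div_iff_mul_le (Or.inl hM0) (Or.inl ENNReal.ofReal_ne_top), hBn]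
      calc ν (A ∩ Q n) * ENNReal.ofReal M
          ≤ ν (univ.pi fun i => Icc (x i - r) (x i + r)) * ENNReal.ofReal M :=
            mul_le_mul_left hle _
        _ = ENNReal.ofReal M * ν (univ.pi fun i => Icc (x i - r) (x i + r)) := mul_comm _ _
        _ ≤ ν (Dl x) := hxA
    · have : A ∩ Q n = ∅ := not_nonempty_iff_eq_empty.mp h
      simp [this]
  -- Step 3: total mass of the dilated boxes
  have step3 : ∑' n, ν (B n) ≤ ENNReal.ofReal (4 ^ d * ∏ i, lam i) := by
    have hrw : ∀ n, ν (B n) = ∫⁻ y, (B n).indicator 1 y ∂ν := fun n =>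
      (lintegral_indicator_one (hBmeas n)).symm
    simp_rw [hrw]
    rw [← lintegral_tsum fun n => (measurable_one.indicator (hBmeas n)).aemeasurable]
    have hpt : ∀ y, ∑' n, (B n).indicator (1 : (Fin d → ℝ) → ℝ≥0∞) y
        ≤ ENNReal.ofReal (4 ^ d * ∏ i, lam i) := by
      intro y
      set F : Finset (Fin d → ℤ) :=
        Fintype.piFinset fun i => Finset.Icc ⌈y i / r - lam i - 1⌉ ⌊y i / r + lam i⌋ with hF
      have hsupp : ∀ n, (B n).indicator (1 : (Fin d → ℝ) → ℝ≥0∞) y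
          ≤ (↑F : Set (Fin d → ℤ)).indicator 1 n := by
        intro n
        by_cases hy : y ∈ B n
        · have hnF : n ∈ F := by
            have hBn : B n = if h : (A ∩ Q n).Nonempty then Dl h.choose else ∅ := rfl
            rw [hBn] at hy
            by_cases h : (A ∩ Q n).Nonempty
            · rw [dif_pos h] at hy
              obtain ⟨hxA, hxQ⟩ := h.choose_spec
              set x := h.choose
              rw [hF, Fintype.mem_piFinset]
              intro i
              have h1 := hxQ i (mem_univ i)
              have h2 := hy i (mem_univ i)
              simp only [mem_Ico] at h1
              simp only [hDl, mem_Icc] at h2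
              rw [Finset.mem_Icc]
              constructor
              · rw [Int.ceil_le]
                have : y i - lam i * r < ((n i : ℝ) + 1) * r := by nlinarith [h1.2, h2.1]
                rw [div_sub' hr.ne', div_sub' hr.ne', div_le_iff₀ hr]
                nlinarith
              · rw [Int.le_floor]
                have : (n i : ℝ) * r ≤ y i + lam i * r := by linarith [h1.1, h2.1]
                rw [div_add' _ _ _ hr.ne', le_div_iff₀ hr]
                nlinarith
            · rw [dif_neg h] at hy; exact absurd hy (notMem_empty y)
          simp [Set.indicator_apply, hy, hnF]
        · simp [Set.indicator_apply, hy]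
      calc ∑' n, (B n).indicator (1 : (Fin d → ℝ) → ℝ≥0∞) y
          ≤ ∑' n, (↑F : Set (Fin d → ℤ)).indicator 1 n := ENNReal.tsum_le_tsum hsupp
        _ = ∑ n ∈ F, (↑F : Set (Fin d → ℤ)).indicator 1 n :=
            tsum_eq_sum (fun n hn => Set.indicator_of_notMem (by simpa using hn) _)
        _ = (F.card : ℝ≥0∞) := by
            rw [Finset.sum_congr rfl fun n hn =>
              Set.indicator_of_mem (by simpa using hn) (1 : (Fin d → ℤ) → ℝ≥0∞)]
            simp
        _ ≤ ENNReal.ofReal (4 ^ d * ∏ i, lam i) := by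
            rw [← ENNReal.ofReal_natCast]
            apply ENNReal.ofReal_le_ofReal
            have hcard : ∀ i, ((Finset.Icc ⌈y i / r - lam i - 1⌉ ⌊y i / r + lam i⌋).card : ℝ)
                ≤ 4 * lam i := by
              intro i
              have hl := hlam i
              rw [Int.card_Icc]
              rcases le_or_gt (⌊y i / r + lam i⌋ + 1 - ⌈y i / r - lam i - 1⌉) 0 with hle | hlt
              · rw [Int.toNat_of_nonpos hle]; simp; linarith
              · have hcast : ((⌊y i / r + lam i⌋ + 1 - ⌈y i / r - lam i - 1⌉).toNat : ℝ)
                    = ((⌊y i / r + lam i⌋ : ℝ) + 1 - (⌈y i / r - lam i - 1⌉ : ℝ)) := by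
                  rw [show ((⌊y i / r + lam i⌋ + 1 - ⌈y i / r - lam i - 1⌉).toNat : ℝ)
                      = (((⌊y i / r + lam i⌋ + 1 - ⌈y i / r - lam i - 1⌉).toNat : ℤ) : ℝ) by
                    push_cast; ring]
                  rw [Int.toNat_of_nonneg hlt.le]
                  push_cast; ring
                rw [hcast]
                have h1 : (⌊y i / r + lam i⌋ : ℝ) ≤ y i / r + lam i := Int.floor_le _
                have h2 : y i / r - lam i - 1 ≤ (⌈y i / r - lam i - 1⌉ : ℝ) := Int.le_ceil _
                linarith
            rw [hF, Fintype.card_piFinset]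
            push_cast
            calc ∏ i, ((Finset.Icc ⌈y i / r - lam i - 1⌉ ⌊y i / r + lam i⌋).card : ℝ)
                ≤ ∏ i, (4 * lam i) :=
                  Finset.prod_le_prod (fun i _ => Nat.cast_nonneg _) (fun i _ => hcard i)
              _ = 4 ^ d * ∏ i, lam i := by
                  rw [Finset.prod_mul_distrib, Finset.prod_const]
                  simp
    calc ∫⁻ y, ∑' n, (B n).indicator 1 y ∂ν
        ≤ ∫⁻ _, ENNReal.ofReal (4 ^ d * ∏ i, lam i) ∂ν := lintegral_mono hpt
      _ = ENNReal.ofReal (4 ^ d * ∏ i, lam i) := by simp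
  -- Combine
  have prodnn : (0:ℝ) ≤ ∏ i, lam i :=
    Finset.prod_nonneg fun i _ => le_trans zero_le_one (hlam i)
  calc ν A ≤ ∑' n, ν (A ∩ Q n) := step1
    _ ≤ ∑' n, ν (B n) / ENNReal.ofReal M := ENNReal.tsum_le_tsum step2
    _ = (∑' n, ν (B n)) / ENNReal.ofReal M := by
        simp_rw [div_eq_mul_inv, ENNReal.tsum_mul_right]
    _ ≤ ENNReal.ofReal (4 ^ d * ∏ i, lam i) / ENNReal.ofReal M :=
        ENNReal.div_le_div_right step3 _
    _ = ENNReal.ofReal (4 ^ d * M⁻¹ * ∏ i, lam i) := by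
        rw [← ENNReal.ofReal_div_of_pos hMpos]
        congr 1
        rw [div_eq_mul_inv]
        ring
end

section
/- Let $0<a<1$ and $\varepsilon>0$. There exists a constant $c_0=c_0(a,\varepsilon,d)$ such that for every Borel probability measure $\nu$ on $\mathbb{R}^d$ and every $0<r_0\leq 1/2$, the $\nu$-measure of the set of points $x$ for which there exist $r$ and $h_1,\dots,h_d$ with $0<r<r_0$ and $h_i\geq r^a$ for all $i$ such that $\nu(D(x,h_1,\dots,h_d)) > \prod_{i=1}^d (4h_i/r)^{1+\varepsilon}\,\nu(D(x,r))$, is at most $c_0\, r_0^{d\varepsilon(1-a)}$. -/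
open MeasureTheory Set

lemma tsum_pi_prod {κ : Type*} [Countable κ] : ∀ {d : ℕ} (g : Fin d → κ → ENNReal),
    ∑' f : Fin d → κ, ∏ i, g i (f i) = ∏ i, ∑' x, g i x := by
  intro d
  induction d with
  | zero =>
    intro g
    rw [tsum_eq_single (default : Fin 0 → κ) (fun b hb => absurd (Subsingleton.elim b default) hb)]
    simp
  | succ n ih =>
    intro g
    rw [← (Fin.consEquiv (fun _ : Fin (n+1) => κ)).tsum_eq]
    rw [ENNReal.tsum_prod']
    simp only [Fin.consEquiv_apply, Fin.prod_univ_succ, Fin.cons_zero, Fin.cons_succ]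
    calc ∑' (a : κ) (b : Fin n → κ), g 0 a * ∏ i : Fin n, g i.succ (b i)
        = ∑' (a : κ), g 0 a * ∑' (b : Fin n → κ), ∏ i : Fin n, g i.succ (b i) := by
          congr 1; ext a; rw [ENNReal.tsum_mul_left]
      _ = (∑' (a : κ), g 0 a) * ∏ i : Fin n, ∑' (x : κ), g i.succ x := by
          rw [ih fun i => g i.succ, ENNReal.tsum_mul_right]

lemma mem_Ico_iff_floor {t y : ℝ} (ht : 0 < t) (b : ℤ) :
    y ∈ Ico (t*b) (t*(b+1)) ↔ ⌊y / t⌋ = b := by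
  rw [Int.floor_eq_iff, mem_Ico]
  constructor
  · rintro ⟨h1, h2⟩
    exact ⟨by rw [le_div_iff₀ ht]; linarith, by rw [div_lt_iff₀ ht]; linarith⟩
  · rintro ⟨h1, h2⟩
    rw [le_div_iff₀ ht] at h1
    rw [div_lt_iff₀ ht] at h2
    constructor <;> linarith

lemma core_count {d : ℕ} (ν : Measure (Fin d → ℝ)) [IsProbabilityMeasure ν]
    (s : ℝ) (hs : 0 < s) (m : Fin d → ℕ) (K : ENNReal) (hK : K ≠ 0) :
    ν {x | K * ν (univ.pi fun i => Icc (x i - s) (x i + s)) <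
          ν (univ.pi fun i => Icc (x i - s * 2^(m i)) (x i + s * 2^(m i)))} ≤
      6^d * (∏ i, (2:ENNReal)^(m i)) / K := by
  set F := {x : Fin d → ℝ | K * ν (univ.pi fun i => Icc (x i - s) (x i + s)) <
          ν (univ.pi fun i => Icc (x i - s * 2^(m i)) (x i + s * 2^(m i)))} with hF
  set H : Fin d → ℝ := fun i => s * 2^(m i) with hHdef
  have hH : ∀ i, 0 < H i := fun i => by positivity
  have h2H : ∀ i, 0 < 2 * H i := fun i => by positivity
  -- big grid cells
  set G : (Fin d → ℤ) → Set (Fin d → ℝ) :=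
    fun b => univ.pi fun i => Ico (2*H i * b i) (2*H i * (b i + 1)) with hGdef
  have memG : ∀ (y : Fin d → ℝ) (b : Fin d → ℤ),
      y ∈ G b ↔ ∀ i, ⌊y i / (2 * H i)⌋ = b i := by
    intro y b
    simp only [hGdef, mem_pi, mem_univ, forall_true_left]
    exact forall_congr' fun i => mem_Ico_iff_floor (h2H i) (b i)
  have Gmeas : ∀ b, MeasurableSet (G b) :=
    fun b => MeasurableSet.univ_pi fun i => measurableSet_Ico
  have Gdisj : Pairwise (Function.onFun Disjoint G) := by
    intro b b' hbb'
    rw [Function.onFun, Set.disjoint_left]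
    intro y hy hy'
    rw [memG] at hy hy'
    exact hbb' (funext fun i => (hy i).symm.trans (hy' i))
  have Gsum : ∑' b, ν (G b) ≤ 1 := by
    rw [← measure_iUnion Gdisj Gmeas]
    calc ν (⋃ b, G b) ≤ ν univ := measure_mono (subset_univ _)
      _ = 1 := measure_univ
  -- small cells
  set C : (Fin d → ℤ) → Set (Fin d → ℝ) :=
    fun c => univ.pi fun i => Ico (s * c i) (s * (c i + 1)) with hCdef
  have memC : ∀ (y : Fin d → ℝ) (c : Fin d → ℤ),
      y ∈ C c ↔ ∀ i, ⌊y i / s⌋ = c i := by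
    intro y c
    simp only [hCdef, mem_pi, mem_univ, forall_true_left]
    exact forall_congr' fun i => mem_Ico_iff_floor hs (c i)
  set T : (Fin d → ℤ) → Finset (Fin d → ℤ) :=
    fun b => Fintype.piFinset fun i => Finset.Ico (2^(m i+1) * b i) (2^(m i+1) * (b i + 1)) with hTdef
  have key2H : ∀ i, 2 * H i = s * 2^(m i + 1) := by
    intro i; rw [hHdef]; ring
  -- C c ⊆ G b for c ∈ T b
  have CsubG : ∀ b c, c ∈ T b → C c ⊆ G b := by
    intro b c hc y hy
    simp only [hTdef, Fintype.mem_piFinset, Finset.mem_Ico] at hc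
    simp only [hCdef, mem_pi, mem_univ, forall_true_left, mem_Ico] at hy
    rw [hGdef]
    intro i _
    rw [mem_Ico]
    obtain ⟨h1, h2⟩ := hy i
    obtain ⟨g1, g2⟩ := hc i
    constructor
    · calc 2 * H i * b i = s * ((2^(m i+1) * b i : ℤ) : ℝ) := by rw [key2H i]; push_cast; ring
        _ ≤ s * c i := by
          apply mul_le_mul_of_nonneg_left _ hs.le
          exact_mod_cast g1
        _ ≤ y i := h1
    · calc y i < s * (c i + 1) := h2
        _ ≤ s * ((2^(m i+1) * (b i + 1) : ℤ) : ℝ) := by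
          apply mul_le_mul_of_nonneg_left _ hs.le
          exact_mod_cast g2
        _ = 2 * H i * (b i + 1) := by rw [key2H i]; push_cast; ring
  -- G b covered by cells of T b
  have GsubC : ∀ b, G b ⊆ ⋃ c ∈ T b, C c := by
    intro b y hy
    refine mem_iUnion₂.2 ⟨fun i => ⌊y i / s⌋, ?_, ?_⟩
    · simp only [hTdef, Fintype.mem_piFinset, Finset.mem_Ico]
      intro i
      rw [memG] at hy
      have hy' := hy i
      rw [Int.floor_eq_iff] at hy'
      obtain ⟨h1, h2⟩ := hy'
      rw [le_div_iff₀ (h2H i)] at h1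
      rw [div_lt_iff₀ (h2H i)] at h2
      rw [key2H i] at h1 h2
      constructor
      · rw [Int.le_floor]
        rw [le_div_iff₀ hs]
        push_cast
        push_cast at h1
        linarith
      · rw [Int.floor_lt]
        rw [div_lt_iff₀ hs]
        push_cast
        push_cast at h2
        linarith
    · rw [memC]
      intro i; rfl
  -- the weight W
  set Tri : Finset (Fin d → ℤ) := Fintype.piFinset fun _ => ({-1,0,1} : Finset ℤ) with hTri
  set W : (Fin d → ℤ) → ENNReal := fun b => ∑ t ∈ Tri, ν (G (b + t)) with hW
  -- cell estimate
  have cell_est : ∀ b c, c ∈ T b → ν (F ∩ C c) ≤ W b / K := by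
    intro b c hc
    rcases (F ∩ C c).eq_empty_or_nonempty with he | ⟨x, hxF, hxC⟩
    · rw [he]; simp
    have hWtop : W b ≠ ⊤ := by
      rw [hW]
      exact (ENNReal.sum_lt_top.2 fun t _ => measure_lt_top ν _).ne
    rw [ENNReal.le_div_iff_mul_le (Or.inl hK) (Or.inr hWtop)]
    have sub1 : C c ⊆ univ.pi fun i => Icc (x i - s) (x i + s) := by
      intro y hy
      simp only [hCdef, mem_pi, mem_univ, forall_true_left, mem_Ico] at hy
      have hxC' := hxC
      simp only [hCdef, mem_pi, mem_univ, forall_true_left, mem_Ico] at hxC'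
      intro i _
      obtain ⟨h1, h2⟩ := hy i
      obtain ⟨g1, g2⟩ := hxC' i
      simp only [mem_Icc]
      constructor <;> nlinarith
    have hxG : x ∈ G b := CsubG b c hc hxC
    have sub2 : (univ.pi fun i => Icc (x i - H i) (x i + H i)) ⊆ ⋃ t ∈ Tri, G (b + t) := by
      intro y hy
      simp only [mem_pi, mem_univ, forall_true_left, mem_Icc] at hy
      refine mem_iUnion₂.2 ⟨fun i => ⌊y i / (2 * H i)⌋ - b i, ?_, ?_⟩
      · rw [hTri, Fintype.mem_piFinset]
        intro i
        rw [memG] at hxG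
        have hx' := hxG i
        rw [Int.floor_eq_iff] at hx'
        obtain ⟨g1, g2⟩ := hx'
        rw [le_div_iff₀ (h2H i)] at g1
        rw [div_lt_iff₀ (h2H i)] at g2
        obtain ⟨h1, h2⟩ := hy i
        have hfl : (b i - 1 : ℤ) ≤ ⌊y i / (2 * H i)⌋ := by
          rw [Int.le_floor, le_div_iff₀ (h2H i)]
          push_cast
          nlinarith [hH i]
        have hfu : ⌊y i / (2 * H i)⌋ < b i + 2 := by
          rw [Int.floor_lt, div_lt_iff₀ (h2H i)]
          push_cast
          nlinarith [hH i]
        simp only [Finset.mem_insert, Finset.mem_singleton]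
        omega
      · rw [memG]
        intro i
        simp only [Pi.add_apply]
        omega
    calc ν (F ∩ C c) * K = K * ν (F ∩ C c) := mul_comm _ _
      _ ≤ K * ν (univ.pi fun i => Icc (x i - s) (x i + s)) := by
          apply mul_le_mul_right
          exact measure_mono (Set.inter_subset_right.trans sub1)
      _ ≤ ν (univ.pi fun i => Icc (x i - H i) (x i + H i)) := hxF.le
      _ ≤ ν (⋃ t ∈ Tri, G (b + t)) := measure_mono sub2
      _ ≤ ∑ t ∈ Tri, ν (G (b + t)) := measure_biUnion_finset_le _ _
      _ = W b := rfl
  -- per big cell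
  have Tcard : ∀ b, (T b).card = 2^d * ∏ i, 2^(m i) := by
    intro b
    rw [hTdef, Fintype.card_piFinset]
    have : ∀ i : Fin d, (Finset.Ico (2^(m i+1) * b i) (2^(m i+1) * (b i + 1))).card = 2^(m i + 1) := by
      intro i
      rw [Int.card_Ico]
      have : (2:ℤ)^(m i+1) * (b i + 1) - 2^(m i+1) * b i = 2^(m i + 1) := by ring
      rw [this, show ((2:ℤ)^(m i+1)) = ((2^(m i+1) : ℕ) : ℤ) by push_cast; ring,
        Int.toNat_natCast]
    simp only [this]
    calc ∏ x : Fin d, 2^(m x + 1) = ∏ x : Fin d, (2^(m x) * 2) := by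
          simp [pow_succ]
      _ = (∏ x : Fin d, 2^(m x)) * 2^d := by
          rw [Finset.prod_mul_distrib, Finset.prod_const, Finset.card_univ, Fintype.card_fin]
      _ = 2^d * ∏ i : Fin d, 2^(m i) := mul_comm _ _
  have big_est : ∀ b, ν (F ∩ G b) ≤ (2^d * ∏ i, (2:ENNReal)^(m i)) * (W b / K) := by
    intro b
    calc ν (F ∩ G b) ≤ ν (⋃ c ∈ T b, F ∩ C c) := by
          apply measure_mono
          intro y ⟨hyF, hyG⟩
          obtain ⟨c, hc, hyc⟩ := mem_iUnion₂.1 (GsubC b hyG)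
          exact mem_iUnion₂.2 ⟨c, hc, hyF, hyc⟩
      _ ≤ ∑ c ∈ T b, ν (F ∩ C c) := measure_biUnion_finset_le _ _
      _ ≤ ∑ _c ∈ T b, W b / K := Finset.sum_le_sum fun c hc => cell_est b c hc
      _ = ((T b).card : ENNReal) * (W b / K) := by
          rw [Finset.sum_const, nsmul_eq_mul]
      _ = (2^d * ∏ i, (2:ENNReal)^(m i)) * (W b / K) := by
          rw [Tcard b]
          push_cast
          ring_nf
  -- sum up
  have cover : F ⊆ ⋃ b, F ∩ G b := by
    intro y hy
    exact mem_iUnion.2 ⟨fun i => ⌊y i / (2 * H i)⌋, hy, (memG y _).2 fun i => rfl⟩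
  calc ν F ≤ ν (⋃ b, F ∩ G b) := measure_mono cover
    _ ≤ ∑' b, ν (F ∩ G b) := measure_iUnion_le _
    _ ≤ ∑' b, (2^d * ∏ i, (2:ENNReal)^(m i)) * (W b / K) := ENNReal.tsum_le_tsum big_est
    _ = (2^d * ∏ i, (2:ENNReal)^(m i)) * ((∑' b, W b) / K) := by
        rw [ENNReal.tsum_mul_left]
        congr 1
        simp only [div_eq_mul_inv]
        rw [ENNReal.tsum_mul_right]
    _ ≤ (2^d * ∏ i, (2:ENNReal)^(m i)) * (3^d / K) := by
        apply mul_le_mul_right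
        apply ENNReal.div_le_div_right
        calc ∑' b, W b = ∑ t ∈ Tri, ∑' b, ν (G (b + t)) := by
              rw [hW, Summable.tsum_finsetSum (fun t _ => ENNReal.summable)]
          _ = ∑ t ∈ Tri, ∑' b, ν (G b) := by
              apply Finset.sum_congr rfl
              intro t _
              exact (Equiv.addRight t).tsum_eq fun b => ν (G b)
          _ ≤ ∑ _t ∈ Tri, 1 := Finset.sum_le_sum fun t _ => Gsum
          _ = (Tri.card : ENNReal) := by rw [Finset.sum_const, nsmul_eq_mul, mul_one]
          _ = 3^d := by
              rw [hTri, Fintype.card_piFinset]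
              norm_num
    _ = 6^d * (∏ i, (2:ENNReal)^(m i)) / K := by
        rw [div_eq_mul_inv, div_eq_mul_inv,
          show (6:ENNReal)^d = 2^d*3^d by rw [← mul_pow]; norm_num]
        ring


lemma tsum_ite_pow_le (Q : ENNReal) (P : ℕ → Prop) [DecidablePred P] (N : ℕ)
    (hP : ∀ n, P n → N ≤ n) :
    (∑' n : ℕ, if P n then Q^(n+1) else 0) ≤ Q^(N+1) * (1-Q)⁻¹ := by
  have h1 : (∑' n : ℕ, if P n then Q^(n+1) else 0)
      ≤ ∑' n : ℕ, (if N ≤ n then Q^(n+1) else 0) := by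
    apply ENNReal.tsum_le_tsum
    intro n
    by_cases hc : P n
    · rw [if_pos hc, if_pos (hP n hc)]
    · rw [if_neg hc]
      exact zero_le
  refine h1.trans ?_
  have h2 : (∑' n : ℕ, (if N ≤ n then Q^(n+1) else 0))
      = ∑' i : ℕ, (if N ≤ i + N then Q^(i + N + 1) else 0) := by
    rw [← Summable.sum_add_tsum_nat_add' (f := fun n => if N ≤ n then Q^(n+1) else 0) (k := N)
      ENNReal.summable]
    rw [Finset.sum_eq_zero fun i hi => if_neg (by
      have := Finset.mem_range.1 hi
      omega), zero_add]
  rw [h2]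
  have h3 : ∀ i : ℕ, (if N ≤ i + N then Q^(i + N + 1) else 0) = Q^(N+1) * Q^i := by
    intro i
    rw [if_pos (by omega), show i + N + 1 = (N + 1) + i by ring, pow_add]
  rw [tsum_congr h3, ENNReal.tsum_mul_left, ENNReal.tsum_geometric]

lemma ofReal_two_rpow_pow (ε : ℝ) (k : ℕ) :
    (ENNReal.ofReal ((2:ℝ)^(-ε)))^k = ENNReal.ofReal ((2:ℝ)^(-((k:ℝ)*ε))) := by
  rw [← ENNReal.ofReal_pow (by positivity), ← Real.rpow_natCast ((2:ℝ)^(-ε)) k,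
    ← Real.rpow_mul (by norm_num : (0:ℝ) ≤ 2)]
  congr 1
  ring

set_option maxHeartbeats 2000000 in
theorem stmt1 {d : ℕ} (a ε : ℝ) (ha : 0 < a) (ha1 : a < 1) (hε : 0 < ε) :
    ∃ c0 : ℝ, ∀ ν : Measure (Fin d → ℝ), IsProbabilityMeasure ν →
      ∀ r0 : ℝ, 0 < r0 → r0 ≤ 1 / 2 →
      ν {x | ∃ r : ℝ, ∃ h : Fin d → ℝ, 0 < r ∧ r < r0 ∧ (∀ i, r ^ a ≤ h i) ∧
          (∏ i, ENNReal.ofReal ((4 * h i / r) ^ (1 + ε))) *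
            ν (univ.pi fun i => Icc (x i - r) (x i + r)) <
          ν (univ.pi fun i => Icc (x i - h i) (x i + h i))} ≤
        ENNReal.ofReal (c0 * r0 ^ ((d : ℝ) * ε * (1 - a))) := by
  classical
  rcases Nat.eq_zero_or_pos d with hd | hd
  · subst hd
    refine ⟨1, fun ν hν r0 hr0 hr0' => ?_⟩
    have he : {x : Fin 0 → ℝ | ∃ r : ℝ, ∃ h : Fin 0 → ℝ, 0 < r ∧ r < r0 ∧ (∀ i, r ^ a ≤ h i) ∧
          (∏ i, ENNReal.ofReal ((4 * h i / r) ^ (1 + ε))) *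
            ν (univ.pi fun i => Icc (x i - r) (x i + r)) <
          ν (univ.pi fun i => Icc (x i - h i) (x i + h i))} = ∅ := by
      ext x
      simp only [mem_setOf_eq, mem_empty_iff_false, iff_false]
      rintro ⟨r, h, hr, hrr0, hra, hlt⟩
      simp only [Finset.univ_eq_empty, Finset.prod_empty, one_mul] at hlt
      rw [show (univ.pi fun i : Fin 0 => Icc (x i - r) (x i + r)) = univ by ext y; simp,
        show (univ.pi fun i : Fin 0 => Icc (x i - h i) (x i + h i)) = univ by ext y; simp] at hlt
      exact lt_irrefl _ hlt
    rw [he, measure_empty]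
    exact zero_le
  -- main case
  set q : ENNReal := ENNReal.ofReal ((2:ℝ) ^ (-ε)) with hqdef
  set Q : ENNReal := ENNReal.ofReal ((2:ℝ) ^ (-((1-a)*ε*(d:ℝ)))) with hQdef
  have hq1 : q < 1 := ENNReal.ofReal_lt_one.2
    (Real.rpow_lt_one_of_one_lt_of_neg one_lt_two (by linarith))
  have hQ1 : Q < 1 := ENNReal.ofReal_lt_one.2
    (Real.rpow_lt_one_of_one_lt_of_neg one_lt_two (by
      have : 0 < (1-a)*ε*(d:ℝ) := by
        apply mul_pos (mul_pos (by linarith) hε)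
        exact_mod_cast hd
      linarith))
  set B : ENNReal := 6^d * ((1 - q)⁻¹)^d * (1 - Q)⁻¹ with hBdef
  have hB : B ≠ ⊤ := by
    apply ENNReal.mul_ne_top (ENNReal.mul_ne_top ?_ ?_) ?_
    · exact ENNReal.pow_ne_top (by simp)
    · exact ENNReal.pow_ne_top (ENNReal.inv_ne_top.2 (tsub_pos_of_lt hq1).ne')
    · exact ENNReal.inv_ne_top.2 (tsub_pos_of_lt hQ1).ne'
  refine ⟨B.toReal, fun ν hν r0 hr0 hr0' => ?_⟩
  set β : ℝ := (d:ℝ) * ε * (1 - a) with hβdef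
  have hβ : 0 ≤ β := by
    apply mul_nonneg (mul_nonneg (by positivity) hε.le)
    linarith
  -- definitions
  set sc : ℕ → ℝ := fun n => (1/2:ℝ)^(n+1) with hscdef
  have hsc : ∀ n, 0 < sc n := fun n => by positivity
  set Kd : ℕ → (Fin d → ℕ) → ENNReal :=
    fun n j => ∏ i, ENNReal.ofReal (((2:ℝ)^(j i + 1)) ^ (1+ε)) with hKddef
  have hKd0 : ∀ n j, Kd n j ≠ 0 := by
    intro n j
    rw [hKddef]
    rw [Finset.prod_ne_zero_iff]
    intro i _
    exact (ENNReal.ofReal_pos.2 (Real.rpow_pos_of_pos (by positivity) _)).ne'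
  set FF : ℕ × (Fin d → ℕ) → Set (Fin d → ℝ) := fun p =>
    {x | Kd p.1 p.2 * ν (univ.pi fun i => Icc (x i - sc p.1) (x i + sc p.1)) <
      ν (univ.pi fun i => Icc (x i - sc p.1 * 2^(p.2 i + 1)) (x i + sc p.1 * 2^(p.2 i + 1)))}
    with hFFdef
  set Cond : ℕ × (Fin d → ℕ) → Prop := fun p =>
    (1/2:ℝ)^(p.1+1) < r0 ∧ ∀ i, (p.1:ℝ) - ((p.1:ℝ)+1)*a < p.2 i with hConddef
  set cov : ℕ × (Fin d → ℕ) → Set (Fin d → ℝ) := fun p =>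
    if Cond p then FF p else ∅ with hcovdef
  have hhalf : ∀ k : ℕ, ((1/2:ℝ)^k) = (2:ℝ)^(-(k:ℝ)) := by
    intro k
    rw [one_div, inv_pow, ← Real.rpow_natCast 2 k, ← Real.rpow_neg (by norm_num)]
  have epow : ∀ (c : ℝ) (k : ℕ), ((2:ℝ)^c)^k = (2:ℝ)^(c*k) := by
    intro c k
    rw [← Real.rpow_natCast ((2:ℝ)^c) k, ← Real.rpow_mul (by norm_num : (0:ℝ) ≤ 2)]
  -- Step 1 : covering
  have step1 : {x : Fin d → ℝ | ∃ r : ℝ, ∃ h : Fin d → ℝ, 0 < r ∧ r < r0 ∧ (∀ i, r ^ a ≤ h i) ∧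
          (∏ i, ENNReal.ofReal ((4 * h i / r) ^ (1 + ε))) *
            ν (univ.pi fun i => Icc (x i - r) (x i + r)) <
          ν (univ.pi fun i => Icc (x i - h i) (x i + h i))} ⊆ ⋃ p, cov p := by
    intro x hx
    obtain ⟨r, h, hr, hrr0, hra, hlt⟩ := hx
    have hhi : ∀ i, 0 < h i := fun i => lt_of_lt_of_le (Real.rpow_pos_of_pos hr a) (hra i)
    have hr12 : r < 1/2 := lt_of_lt_of_le hrr0 hr0'
    have hex : ∃ k, (1/2:ℝ)^(k+1) < r := by
      obtain ⟨k, hk⟩ := exists_pow_lt_of_lt_one hr (by norm_num : (1/2:ℝ) < 1)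
      exact ⟨k, lt_of_le_of_lt
        (pow_le_pow_of_le_one (by norm_num) (by norm_num) (Nat.le_succ k)) hk⟩
    obtain ⟨N, hN1, hmin⟩ : ∃ N : ℕ, (1/2:ℝ)^(N+1) < r ∧ ∀ m < N, ¬((1/2:ℝ)^(m+1) < r) :=
      ⟨Nat.find hex, Nat.find_spec hex, fun m hm => Nat.find_min hex hm⟩
    have hN2 : r ≤ (1/2:ℝ)^N := by
      rcases N with _ | M
      · norm_num; linarith
      · have := not_lt.1 (hmin M (Nat.lt_succ_self M))
        exact this
    have key : ∀ i, ∃ ji : ℕ, ((N:ℝ) - ((N:ℝ)+1)*a < (ji:ℝ)) ∧ h i ≤ sc N * 2^(ji+1) ∧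
        (2:ℝ)^((ji:ℝ)+1) ≤ 4 * h i / r := by
      intro i
      set L : ℤ := ⌈Real.logb 2 (h i)⌉ with hLdef
      have hL1 : h i ≤ (2:ℝ)^((L:ℝ)) := by
        conv_lhs => rw [← Real.rpow_logb two_pos (by norm_num) (hhi i)]
        exact (Real.rpow_le_rpow_left_iff one_lt_two).2 (Int.le_ceil _)
      have hL2 : (2:ℝ)^((L:ℝ) - 1) < h i := by
        conv_rhs => rw [← Real.rpow_logb two_pos (by norm_num) (hhi i)]
        apply (Real.rpow_lt_rpow_left_iff one_lt_two).2
        have := Int.ceil_lt_add_one (Real.logb 2 (h i))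
        rw [hLdef]
        linarith
      have hLa : -(((N:ℝ)+1)*a) < (L:ℝ) := by
        have h1 : (2:ℝ)^(-(((N:ℝ)+1)*a)) < h i := by
          calc (2:ℝ)^(-(((N:ℝ)+1)*a)) = ((2:ℝ)^(-((N:ℝ)+1)))^a := by
                rw [← Real.rpow_mul (by norm_num : (0:ℝ) ≤ 2)]
                ring_nf
            _ = ((1/2:ℝ)^(N+1))^a := by
                rw [hhalf (N+1)]
                congr 2
                push_cast
                ring
            _ < r^a := Real.rpow_lt_rpow (by positivity) hN1 ha
            _ ≤ h i := hra i
        exact (Real.rpow_lt_rpow_left_iff one_lt_two).1 (h1.trans_le hL1)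
      have hLN : 0 ≤ (N:ℤ) + L := by
        have h3 : ((N:ℝ)+1) * a < (N:ℝ)+1 := by nlinarith [Nat.cast_nonneg (α := ℝ) N]
        have h4 : (((-L) : ℤ) : ℝ) < (((N:ℤ) + 1 : ℤ) : ℝ) := by push_cast; linarith
        have h5 : -L < (N:ℤ) + 1 := by exact_mod_cast h4
        omega
      set ji : ℕ := ((N:ℤ) + L).toNat with hjidef
      have hc : (ji:ℝ) = (N:ℝ) + (L:ℝ) := by
        have : ((ji:ℤ):ℝ) = (((N:ℤ) + L : ℤ):ℝ) := by
          rw [hjidef, Int.toNat_of_nonneg hLN]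
        push_cast at this
        exact_mod_cast this
      refine ⟨ji, ?_, ?_, ?_⟩
      · rw [hc]; linarith
      · have e1 : sc N * 2^(ji+1) = (2:ℝ)^((L:ℝ)) := by
          rw [hscdef]
          simp only
          rw [hhalf (N+1), ← Real.rpow_natCast 2 (ji+1), ← Real.rpow_add two_pos]
          congr 1
          push_cast
          rw [hc]
          ring
        rw [e1]
        exact hL1
      · rw [le_div_iff₀ hr]
        have hrN : r ≤ (2:ℝ)^(-(N:ℝ)) := by rw [← hhalf N]; exact hN2
        calc (2:ℝ)^((ji:ℝ) + 1) * r ≤ (2:ℝ)^((ji:ℝ) + 1) * (2:ℝ)^(-(N:ℝ)) := by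
              apply mul_le_mul_of_nonneg_left hrN (by positivity)
          _ = (2:ℝ)^((L:ℝ) + 1) := by
              rw [← Real.rpow_add two_pos]
              congr 1
              rw [hc]
              ring
          _ = 4 * (2:ℝ)^((L:ℝ) - 1) := by
              rw [show (L:ℝ) + 1 = 2 + ((L:ℝ) - 1) by ring, Real.rpow_add two_pos]
              norm_num
          _ ≤ 4 * h i := by linarith
    choose j hj1 hj2 hj3 using key
    have hCond : Cond (N, j) := by
      rw [hConddef]
      exact ⟨lt_trans hN1 hrr0, hj1⟩
    apply mem_iUnion.2 ⟨(N, j), ?_⟩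
    rw [hcovdef]
    simp only [if_pos hCond]
    rw [hFFdef]
    simp only [mem_setOf_eq]
    have hscr : sc N < r := hN1
    calc Kd N j * ν (univ.pi fun i => Icc (x i - sc N) (x i + sc N))
        ≤ (∏ i, ENNReal.ofReal ((4 * h i / r) ^ (1 + ε))) *
            ν (univ.pi fun i => Icc (x i - r) (x i + r)) := by
          apply mul_le_mul'
          · rw [hKddef]
            apply Finset.prod_le_prod'
            intro i _
            apply ENNReal.ofReal_le_ofReal
            apply Real.rpow_le_rpow (by positivity) _ (by linarith)
            calc ((2:ℝ)^(j i + 1)) = (2:ℝ)^((j i :ℝ)+1) := by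
                  rw [← Real.rpow_natCast 2 (j i + 1)]
                  congr 1
                  push_cast
                  ring
              _ ≤ 4 * h i / r := hj3 i
          · apply measure_mono
            apply pi_mono
            intro i _
            exact Icc_subset_Icc (by linarith) (by linarith)
      _ < ν (univ.pi fun i => Icc (x i - h i) (x i + h i)) := hlt
      _ ≤ ν (univ.pi fun i => Icc (x i - sc N * 2^(j i + 1)) (x i + sc N * 2^(j i + 1))) := by
          apply measure_mono
          apply pi_mono
          intro i _
          exact Icc_subset_Icc (by linarith [hj2 i]) (by linarith [hj2 i])
  -- Step 2 : per-piece bound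
  set w : ℕ → ENNReal := fun k => q^(k+1) with hwdef
  have hwof : ∀ k : ℕ, w k = ENNReal.ofReal ((2:ℝ) ^ (-(((k:ℝ)+1) * ε))) := by
    intro k
    rw [hwdef, hqdef]
    simp only
    rw [ofReal_two_rpow_pow]
    congr 2
    push_cast
    ring
  have factor : ∀ k : ℕ, w k * ENNReal.ofReal (((2:ℝ)^(k+1))^(1+ε)) = (2:ENNReal)^(k+1) := by
    intro k
    rw [hwof k]
    rw [← ENNReal.ofReal_mul (by positivity)]
    have e1 : (2:ℝ)^(-(((k:ℝ)+1) * ε)) * ((2:ℝ)^(k+1))^(1+ε) = (2:ℝ)^(k+1) := by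
      rw [← Real.rpow_natCast 2 (k+1), ← Real.rpow_mul (by norm_num : (0:ℝ) ≤ 2),
        ← Real.rpow_add two_pos]
      congr 1
      push_cast
      ring
    rw [e1, ENNReal.ofReal_pow (by norm_num : (0:ℝ) ≤ 2)]
    norm_num
  have hKdt : ∀ n jj, Kd n jj ≠ ⊤ := by
    intro n jj
    rw [hKddef]
    exact (ENNReal.prod_lt_top fun i _ => ENNReal.ofReal_lt_top).ne
  have step2 : ∀ p, ν (cov p) ≤ if Cond p then 6^d * ∏ i, w (p.2 i) else 0 := by
    intro p
    rw [hcovdef]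
    by_cases hp : Cond p
    · simp only [if_pos hp]
      have hcore := core_count ν (sc p.1) (hsc p.1) (fun i => p.2 i + 1) (Kd p.1 p.2)
        (hKd0 p.1 p.2)
      refine le_trans hcore ?_
      rw [ENNReal.div_le_iff (hKd0 p.1 p.2) (hKdt p.1 p.2)]
      calc 6^d * (∏ i, (2:ENNReal)^(p.2 i + 1))
          = (6^d * ∏ i, w (p.2 i)) * Kd p.1 p.2 := by
            rw [hKddef]
            simp only
            rw [mul_assoc, ← Finset.prod_mul_distrib]
            congr 1
            exact Finset.prod_congr rfl fun i _ => (factor (p.2 i)).symm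
        _ ≤ (6^d * ∏ i, w (p.2 i)) * Kd p.1 p.2 := le_refl _
    · simp only [if_neg hp, measure_empty, le_refl]
  -- Step 3 : sum the bound
  have step3 : ∑' p : ℕ × (Fin d → ℕ), (if Cond p then 6^d * ∏ i, w (p.2 i) else 0)
      ≤ B * ENNReal.ofReal (r0 ^ β) := by
    set A : ENNReal := 6^d * ((1 - q)⁻¹)^d with hAdef
    have qle : ∀ n : ℕ, q^(⌈(n:ℝ) - ((n:ℝ)+1)*a⌉₊+1)
        ≤ ENNReal.ofReal ((2:ℝ)^(-((((n:ℝ)+1)*(1-a))*ε))) := by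
      intro n
      rw [hqdef, ofReal_two_rpow_pow]
      apply ENNReal.ofReal_le_ofReal
      apply (Real.rpow_le_rpow_left_iff one_lt_two).2
      have hJc : ((n:ℝ) - ((n:ℝ)+1)*a) ≤ (⌈(n:ℝ) - ((n:ℝ)+1)*a⌉₊ : ℝ) := Nat.le_ceil _
      have : ((⌈(n:ℝ) - ((n:ℝ)+1)*a⌉₊+1 : ℕ) : ℝ) = (⌈(n:ℝ) - ((n:ℝ)+1)*a⌉₊ : ℝ) + 1 := by
        push_cast
        ring
      rw [this]
      nlinarith
    have inner : ∀ n : ℕ, (∑' jj : Fin d → ℕ, if Cond (n, jj) then 6^d * ∏ i, w (jj i) else 0)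
        ≤ (if (1/2:ℝ)^(n+1) < r0 then A * Q^(n+1) else 0) := by
      intro n
      by_cases hn : (1/2:ℝ)^(n+1) < r0
      case neg =>
        simp only [if_neg hn]
        have hz : ∀ jj : Fin d → ℕ, (if Cond (n, jj) then 6^d * ∏ i, w (jj i) else 0) = 0 := by
          intro jj
          rw [if_neg]
          intro hC
          rw [hConddef] at hC
          exact hn hC.1
        simp only [hz, tsum_zero, le_refl]
      case pos =>
        simp only [if_pos hn]
        set v : ℕ → ENNReal := fun k => if ((n:ℝ) - ((n:ℝ)+1)*a < (k:ℝ)) then q^(k+1) else 0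
          with hvdef
        have hterm : ∀ jj : Fin d → ℕ, (if Cond (n, jj) then 6^d * ∏ i, w (jj i) else 0)
            ≤ 6^d * ∏ i, v (jj i) := by
          intro jj
          by_cases hC : Cond (n, jj)
          · rw [if_pos hC]
            apply mul_le_mul_right
            apply Finset.prod_le_prod'
            intro i _
            rw [hvdef, hwdef]
            simp only
            rw [if_pos]
            rw [hConddef] at hC
            exact hC.2 i
          · rw [if_neg hC]
            exact zero_le
        have sumv : (∑' k : ℕ, v k) ≤ (1-q)⁻¹ *
            ENNReal.ofReal ((2:ℝ)^(-((((n:ℝ)+1)*(1-a))*ε))) := by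
          have h4 : (∑' k : ℕ, v k) ≤ q^(⌈(n:ℝ) - ((n:ℝ)+1)*a⌉₊+1) * (1-q)⁻¹ := by
            rw [hvdef]
            apply tsum_ite_pow_le q _ _ ?_
            intro k hk
            exact Nat.ceil_le.2 hk.le
          refine h4.trans ?_
          rw [mul_comm]
          exact mul_le_mul_right (qle n) _
        calc (∑' jj : Fin d → ℕ, if Cond (n, jj) then 6^d * ∏ i, w (jj i) else 0)
            ≤ ∑' jj : Fin d → ℕ, 6^d * ∏ i, v (jj i) := ENNReal.tsum_le_tsum hterm
          _ = 6^d * ∏ i : Fin d, ∑' k : ℕ, v k := by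
              rw [ENNReal.tsum_mul_left, tsum_pi_prod (fun _ => v)]
          _ = 6^d * (∑' k : ℕ, v k)^d := by
              rw [Finset.prod_const, Finset.card_univ, Fintype.card_fin]
          _ ≤ 6^d * ((1-q)⁻¹ * ENNReal.ofReal ((2:ℝ)^(-((((n:ℝ)+1)*(1-a))*ε))))^d := by
              exact mul_le_mul_right (pow_le_pow_left' sumv d) _
          _ = A * Q^(n+1) := by
              rw [hAdef, hQdef, mul_pow,
                ofReal_two_rpow_pow ((((n:ℝ)+1)*(1-a))*ε) d,
                ofReal_two_rpow_pow ((1-a)*ε*(d:ℝ)) (n+1),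
                show (d:ℝ) * ((((n:ℝ)+1)*(1-a))*ε) = ((n+1:ℕ):ℝ) * ((1-a)*ε*(d:ℝ)) by
                  push_cast; ring]
              ring
    have hex0 : ∃ n : ℕ, (1/2:ℝ)^(n+1) < r0 := by
      obtain ⟨k, hk⟩ := exists_pow_lt_of_lt_one hr0 (by norm_num : (1/2:ℝ) < 1)
      exact ⟨k, lt_of_le_of_lt
        (pow_le_pow_of_le_one (by norm_num) (by norm_num) (Nat.le_succ k)) hk⟩
    obtain ⟨N1, hN1spec, hmono⟩ : ∃ N1 : ℕ, (1/2:ℝ)^(N1+1) < r0 ∧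
        ∀ n, (1/2:ℝ)^(n+1) < r0 → N1 ≤ n :=
      ⟨Nat.find hex0, Nat.find_spec hex0, fun n hn => Nat.find_min' hex0 hn⟩
    have hQV : Q^(N1+1) ≤ ENNReal.ofReal (r0 ^ β) := by
      rw [hQdef, ← ENNReal.ofReal_pow (by positivity)]
      apply ENNReal.ofReal_le_ofReal
      have e3 : ((2:ℝ)^(-((1-a)*ε*(d:ℝ))))^(N1+1) = ((1/2:ℝ)^(N1+1)) ^ β := by
        rw [epow, hhalf (N1+1), ← Real.rpow_mul (by norm_num : (0:ℝ) ≤ 2), hβdef]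
        congr 1
        push_cast
        ring
      rw [e3]
      exact Real.rpow_le_rpow (by positivity) hN1spec.le hβ
    calc (∑' p : ℕ × (Fin d → ℕ), if Cond p then 6^d * ∏ i, w (p.2 i) else 0)
        = ∑' n : ℕ, ∑' jj : Fin d → ℕ, (if Cond (n, jj) then 6^d * ∏ i, w (jj i) else 0) :=
          ENNReal.tsum_prod'
      _ ≤ ∑' n : ℕ, (if (1/2:ℝ)^(n+1) < r0 then A * Q^(n+1) else 0) :=
          ENNReal.tsum_le_tsum inner
      _ = A * ∑' n : ℕ, (if (1/2:ℝ)^(n+1) < r0 then Q^(n+1) else 0) := by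
          rw [← ENNReal.tsum_mul_left]
          apply tsum_congr
          intro n
          by_cases hc : (1/2:ℝ)^(n+1) < r0
          · rw [if_pos hc, if_pos hc]
          · rw [if_neg hc, if_neg hc, mul_zero]
      _ ≤ A * (Q^(N1+1) * (1-Q)⁻¹) :=
          mul_le_mul_right (tsum_ite_pow_le Q _ N1 hmono) _
      _ ≤ A * (ENNReal.ofReal (r0 ^ β) * (1-Q)⁻¹) :=
          mul_le_mul_right (mul_le_mul_left hQV _) _
      _ = B * ENNReal.ofReal (r0 ^ β) := by
          rw [hBdef, hAdef]
          ring
  calc ν _ ≤ ν (⋃ p, cov p) := measure_mono step1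
    _ ≤ ∑' p, ν (cov p) := measure_iUnion_le _
    _ ≤ ∑' p : ℕ × (Fin d → ℕ), (if Cond p then 6^d * ∏ i, w (p.2 i) else 0) :=
        ENNReal.tsum_le_tsum step2
    _ ≤ B * ENNReal.ofReal (r0 ^ β) := step3
    _ = ENNReal.ofReal (B.toReal * r0 ^ β) := by
        rw [ENNReal.ofReal_mul ENNReal.toReal_nonneg, ENNReal.ofReal_toReal hB]
end

section
/- Let $0<a<1$ and $\varepsilon>0$, and let $\nu$ be a Borel probability measure on $\mathbb{R}^d$. Then for $\nu$-almost every $x$ there exists $r_0=r_0(x)\in(0,1)$ such that for all $r\in(0,r_0)$ and all $h_1,\dots,h_d$ with $h_i\geq r^a$ for every $i$, one has $\nu(D(x,h_1,\dots,h_d)) \leq \nu(D(x,r)) \prod_{i=1}^d (4h_i/r)^{1+\varepsilon}$. -/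
open MeasureTheory Set Filter
open scoped ENNReal NNReal

namespace Stmt2Aux

variable {d : ℕ}

def box (x h : Fin d → ℝ) : Set (Fin d → ℝ) :=
  univ.pi fun i => Icc (x i - h i) (x i + h i)

lemma measurableSet_box (x h : Fin d → ℝ) : MeasurableSet (box x h) :=
  MeasurableSet.univ_pi fun _ => measurableSet_Icc

lemma mem_box {x h y : Fin d → ℝ} : y ∈ box x h ↔ ∀ i, x i - h i ≤ y i ∧ y i ≤ x i + h i := by
  simp only [box, mem_univ_pi, mem_Icc]

lemma box_mono {x h h' : Fin d → ℝ} (hh : ∀ i, h i ≤ h' i) : box x h ⊆ box x h' := by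
  intro y hy
  rw [mem_box] at hy ⊢
  exact fun i => ⟨by linarith [(hy i).1, hh i], by linarith [(hy i).2, hh i]⟩

lemma lemA (ν : Measure (Fin d → ℝ)) [IsProbabilityMeasure ν] (r : ℝ) (h : Fin d → ℝ)
    (hr : 0 < r) (hrh : ∀ i, r ≤ h i) (M : ℝ≥0∞) :
    M * ν {x | M * ν (box x fun _ => r) < ν (box x h)} ≤
      ∏ i, ENNReal.ofReal (4 * h i / r) := by
  classical
  set E := {x : Fin d → ℝ | M * ν (box x fun _ => r) < ν (box x h)} with hEdef
  set C : (Fin d → ℤ) → Set (Fin d → ℝ) :=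
    fun w => univ.pi fun i => Ico ((w i : ℝ) * r) (((w i : ℝ) + 1) * r) with hCdef
  have hmemC : ∀ (w : Fin d → ℤ) (y : Fin d → ℝ),
      y ∈ C w ↔ ∀ i, (w i : ℝ) * r ≤ y i ∧ y i < ((w i : ℝ) + 1) * r := by
    intro w y; simp [hCdef, mem_Ico]
  have hcover : E ⊆ ⋃ w, E ∩ C w := by
    intro y hy
    refine mem_iUnion.2 ⟨fun i => ⌊y i / r⌋, hy, (hmemC _ _).2 fun i => ?_⟩
    constructor
    · calc (⌊y i / r⌋ : ℝ) * r ≤ (y i / r) * r :=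
          mul_le_mul_of_nonneg_right (Int.floor_le _) hr.le
        _ = y i := div_mul_cancel₀ _ hr.ne'
    · calc y i = (y i / r) * r := (div_mul_cancel₀ _ hr.ne').symm
        _ < ((⌊y i / r⌋ : ℝ) + 1) * r :=
          mul_lt_mul_of_pos_right (Int.lt_floor_add_one _) hr
  let G : (Fin d → ℤ) → (Fin d → ℝ) → ℝ≥0∞ := fun w =>
    if hne : (E ∩ C w).Nonempty then (box hne.some h).indicator 1 else 0
  have hGmeas : ∀ w, Measurable (G w) := by
    intro w
    simp only [G]
    split
    · exact measurable_one.indicator (measurableSet_box _ _)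
    · exact measurable_const
  have key1 : ∀ w, M * ν (E ∩ C w) ≤ ∫⁻ y, G w y ∂ν := by
    intro w
    by_cases hne : (E ∩ C w).Nonempty
    · simp only [G, dif_pos hne]
      rw [lintegral_indicator_one (measurableSet_box _ _)]
      obtain ⟨hxE, hxC⟩ := hne.some_mem
      have hsub : E ∩ C w ⊆ box hne.some (fun _ => r) := by
        intro y hy
        rw [mem_box]
        intro i
        have h1 := ((hmemC _ _).1 hy.2) i
        have h2 := ((hmemC _ _).1 hxC) i
        refine ⟨by show hne.some i - r ≤ y i; linarith [h1.1, h2.2],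
          by show y i ≤ hne.some i + r; linarith [h1.2, h2.1]⟩
      calc M * ν (E ∩ C w) ≤ M * ν (box hne.some fun _ => r) :=
            mul_le_mul_right (measure_mono hsub) M
        _ ≤ ν (box hne.some h) := hxE.le
    · rw [not_nonempty_iff_eq_empty] at hne
      simp [G, hne]
  have key2 : ∀ y, (∑' w, G w y) ≤ ∏ i, ENNReal.ofReal (4 * h i / r) := by
    intro y
    set T : Finset (Fin d → ℤ) :=
      Fintype.piFinset fun i => Finset.Icc (⌈(y i - h i) / r⌉ - 1) ⌊(y i + h i) / r⌋ with hT
    have hsupp : ∀ w ∉ T, G w y = 0 := by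
      intro w hw
      simp only [G]
      split
      case isTrue hne =>
        by_cases hyb : y ∈ box hne.some h
        · exfalso
          apply hw
          rw [hT, Fintype.mem_piFinset]
          intro i
          have hxC := (hmemC _ _).1 hne.some_mem.2
          have hyi := mem_box.1 hyb i
          rw [Finset.mem_Icc]
          constructor
          · have hcl : (⌈(y i - h i) / r⌉ : ℤ) ≤ w i + 1 := by
              apply Int.ceil_le.2
              push_cast
              rw [div_le_iff₀ hr]
              linarith [(hxC i).2, hyi.2]
            omega
          · apply Int.le_floor.2
            push_cast
            rw [le_div_iff₀ hr]
            linarith [(hxC i).1, hyi.1]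
        · exact indicator_of_notMem hyb _
      case isFalse => rfl
    have hle1 : ∀ w, G w y ≤ 1 := by
      intro w
      simp only [G]
      split
      case isTrue hne =>
        by_cases hyb : y ∈ box hne.some h
        · rw [indicator_of_mem hyb]; exact le_rfl
        · rw [indicator_of_notMem hyb]; exact zero_le_one
      case isFalse => exact zero_le_one
    calc (∑' w, G w y) = ∑ w ∈ T, G w y := tsum_eq_sum hsupp
      _ ≤ ∑ w ∈ T, 1 := Finset.sum_le_sum fun w _ => hle1 w
      _ = (T.card : ℝ≥0∞) := by simp
      _ = ∏ i, ((Finset.Icc (⌈(y i - h i) / r⌉ - 1) ⌊(y i + h i) / r⌋).card : ℝ≥0∞) := by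
          rw [hT, Fintype.card_piFinset]
          push_cast
          rfl
      _ ≤ ∏ i, ENNReal.ofReal (4 * h i / r) := by
          apply Finset.prod_le_prod'
          intro i _
          rw [Int.card_Icc]
          have hcast : (((⌊(y i + h i) / r⌋ + 1 - (⌈(y i - h i) / r⌉ - 1)).toNat : ℕ) : ℝ)
              ≤ 4 * h i / r := by
            rcases le_or_gt (⌊(y i + h i) / r⌋ + 1 - (⌈(y i - h i) / r⌉ - 1)) 0 with hz | hz
            · rw [Int.toNat_of_nonpos hz]
              have : 0 < 4 * h i / r := by
                apply div_pos (by linarith [hrh i]) hr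
              simpa using this.le
            · rw [← Int.cast_natCast (R := ℝ), Int.toNat_of_nonneg hz.le]
              push_cast
              have hb : ((⌊(y i + h i) / r⌋ : ℝ)) ≤ (y i + h i) / r := Int.floor_le _
              have ha : (y i - h i) / r ≤ ((⌈(y i - h i) / r⌉ : ℝ)) := Int.le_ceil _
              have hdiff : (y i + h i) / r - (y i - h i) / r = 2 * (h i / r) := by ring
              have h1r : 1 ≤ h i / r := (one_le_div hr).2 (hrh i)
              have h4 : 4 * h i / r = 4 * (h i / r) := by ring
              linarith
          calc (((⌊(y i + h i) / r⌋ + 1 - (⌈(y i - h i) / r⌉ - 1)).toNat : ℕ) : ℝ≥0∞)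
              = ENNReal.ofReal (((⌊(y i + h i) / r⌋ + 1 - (⌈(y i - h i) / r⌉ - 1)).toNat : ℕ) : ℝ) := by
                rw [ENNReal.ofReal_natCast]
            _ ≤ ENNReal.ofReal (4 * h i / r) := ENNReal.ofReal_le_ofReal hcast
  calc M * ν E ≤ M * ∑' w, ν (E ∩ C w) :=
        mul_le_mul_right ((measure_mono hcover).trans (measure_iUnion_le _)) M
    _ = ∑' w, M * ν (E ∩ C w) := ENNReal.tsum_mul_left.symm
    _ ≤ ∑' w, ∫⁻ y, G w y ∂ν := ENNReal.tsum_le_tsum key1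
    _ = ∫⁻ y, ∑' w, G w y ∂ν := (lintegral_tsum fun w => (hGmeas w).aemeasurable).symm
    _ ≤ ∫⁻ _, ∏ i, ENNReal.ofReal (4 * h i / r) ∂ν := lintegral_mono key2
    _ = ∏ i, ENNReal.ofReal (4 * h i / r) := by simp

lemma tsum_pi_prod : ∀ (n : ℕ) (f : Fin n → ℕ → ℝ≥0∞),
    (∑' m : Fin n → ℕ, ∏ i, f i (m i)) = ∏ i, ∑' k, f i k := by
  intro n
  induction n with
  | zero =>
      intro f
      rw [tsum_eq_single (fun i => i.elim0)]
      · simp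
      · intro m hm
        exact absurd (Subsingleton.elim m _) hm
  | succ n ih =>
      intro f
      rw [← (Fin.consEquiv fun _ : Fin (n + 1) => ℕ).tsum_eq, ENNReal.tsum_prod']
      have hterm : ∀ (k : ℕ) (m : Fin n → ℕ),
          (∏ i, f i ((Fin.consEquiv fun _ : Fin (n + 1) => ℕ) (k, m) i))
            = f 0 k * ∏ i : Fin n, f i.succ (m i) := by
        intro k m
        rw [Fin.prod_univ_succ]
        simp [Fin.consEquiv]
      calc (∑' k, ∑' m : Fin n → ℕ, ∏ i, f i ((Fin.consEquiv fun _ : Fin (n + 1) => ℕ) (k, m) i))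
          = ∑' k, ∑' m : Fin n → ℕ, f 0 k * ∏ i : Fin n, f i.succ (m i) := by
            congr 1; funext k; congr 1; funext m; exact hterm k m
        _ = ∑' k, f 0 k * ∑' m : Fin n → ℕ, ∏ i : Fin n, f i.succ (m i) := by
            congr 1; funext k; exact ENNReal.tsum_mul_left
        _ = (∑' k, f 0 k) * ∑' m : Fin n → ℕ, ∏ i : Fin n, f i.succ (m i) :=
            ENNReal.tsum_mul_right
        _ = (∑' k, f 0 k) * ∏ i : Fin n, ∑' k, f i.succ k := by rw [ih]
        _ = ∏ i, ∑' k, f i k := (Fin.prod_univ_succ (fun i => ∑' k, f i k)).symm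

noncomputable def cc (a : ℝ) (n : ℕ) : ℤ := ⌊-((n : ℝ) * a)⌋

noncomputable def rr (n : ℕ) : ℝ := (2:ℝ) ^ (-(n:ℝ))

noncomputable def hf (a : ℝ) (n : ℕ) (m : Fin d → ℕ) (i : Fin d) : ℝ :=
  (2:ℝ) ^ ((cc a n : ℝ) + (m i : ℝ))

noncomputable def Mf (a ε : ℝ) (n : ℕ) (m : Fin d → ℕ) : ℝ≥0∞ :=
  ∏ i, ENNReal.ofReal ((2 * hf a n m i / rr n) ^ (1 + ε/2))

lemma rr_pos (n : ℕ) : 0 < rr n := Real.rpow_pos_of_pos two_pos _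

lemma hf_pos (a : ℝ) (n : ℕ) (m : Fin d → ℕ) (i : Fin d) : 0 < hf a n m i :=
  Real.rpow_pos_of_pos two_pos _

lemma hcc_le (a : ℝ) (n : ℕ) : (cc a n : ℝ) ≤ -((n:ℝ) * a) := Int.floor_le _

lemma hcc_ge (a : ℝ) (n : ℕ) : -((n:ℝ) * a) - 1 ≤ (cc a n : ℝ) := by
  have := Int.sub_one_lt_floor (-((n:ℝ) * a))
  exact le_of_lt (by simpa [cc] using this)

lemma rr_le_hf {a : ℝ} (ha : 0 < a) (ha1 : a ≤ 1) (n : ℕ) (m : Fin d → ℕ) (i : Fin d) :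
    rr n ≤ hf a n m i := by
  rw [rr, hf]
  apply (Real.rpow_le_rpow_left_iff one_lt_two).2
  have h1 : -((n:ℝ)) ≤ -((n:ℝ) * a) := by nlinarith [Nat.cast_nonneg (α := ℝ) n]
  have h2 : (-(n:ℤ) : ℝ) ≤ ((cc a n : ℝ)) := by
    have := Int.le_floor.2 (show ((-(n:ℤ) : ℤ) : ℝ) ≤ -((n:ℝ) * a) by push_cast; linarith)
    exact_mod_cast this
  push_cast at h2
  have := Nat.cast_nonneg (α := ℝ) (m i)
  linarith

lemma claim1 (a ε : ℝ) (ha : 0 < a) (ha1 : a ≤ 1) (hε : 0 < ε)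
    (ν : Measure (Fin d → ℝ)) [IsProbabilityMeasure ν] (n : ℕ) (m : Fin d → ℕ) :
    ν {x | Mf a ε n m * ν (box x fun _ => rr n) < ν (box x (hf a n m))} ≤
      ∏ i, (ENNReal.ofReal (2 * (2:ℝ) ^ (-(ε/2) * ((n:ℝ) * (1 - a)))) *
        (ENNReal.ofReal ((2:ℝ) ^ (-(ε/2) : ℝ))) ^ (m i)) := by
  have hfacpos : ∀ i : Fin d, (0:ℝ) < (2 * hf a n m i / rr n) ^ (1 + ε/2) := by
    intro i
    exact Real.rpow_pos_of_pos (div_pos (mul_pos two_pos (hf_pos a n m i)) (rr_pos n)) _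
  have hM0 : Mf a ε n m ≠ 0 := by
    rw [Mf]
    exact (CanonicallyOrderedAdd.prod_pos.2
      fun i _ => ENNReal.ofReal_pos.2 (hfacpos i)).ne'
  have hMtop : Mf a ε n m ≠ ⊤ := by
    rw [Mf]
    exact (ENNReal.prod_lt_top fun i _ => ENNReal.ofReal_lt_top).ne
  have h1 := lemA ν (rr n) (hf a n m) (rr_pos n) (fun i => rr_le_hf ha ha1 n m i) (Mf a ε n m)
  rw [← ENNReal.mul_le_mul_iff_right hM0 hMtop]
  refine h1.trans ?_
  simp only [Mf]
  rw [← Finset.prod_mul_distrib]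
  apply Finset.prod_le_prod'
  intro i _
  rw [← ENNReal.ofReal_pow (by positivity), ← ENNReal.ofReal_mul (by positivity),
    ← ENNReal.ofReal_mul (hfacpos i).le]
  apply ENNReal.ofReal_le_ofReal
  -- now a real inequality
  have hrr := rr_pos n
  have hhf := hf_pos a n m i
  have e1 : 2 * hf a n m i / rr n
      = (2:ℝ) ^ (1 + (cc a n : ℝ) + (m i : ℝ) + (n:ℝ)) := by
    rw [hf, rr]
    simp only [Real.rpow_add two_pos, Real.rpow_one,
      Real.rpow_neg (by norm_num : (0:ℝ) ≤ 2)]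
    rw [div_eq_mul_inv, inv_inv]
    ring
  have e2 : 4 * hf a n m i / rr n
      = (2:ℝ) ^ (1 + (1 + (cc a n : ℝ) + (m i : ℝ) + (n:ℝ))) := by
    rw [Real.rpow_add two_pos, Real.rpow_one, ← e1]
    ring
  have hc1 := hcc_ge a n
  have hk0 : (0:ℝ) ≤ (m i : ℝ) := Nat.cast_nonneg _
  have hn0 : (0:ℝ) ≤ (n : ℝ) := Nat.cast_nonneg _
  calc 4 * hf a n m i / rr n
      = (2:ℝ) ^ (1 + (1 + (cc a n : ℝ) + (m i : ℝ) + (n:ℝ))) := e2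
    _ ≤ (2:ℝ) ^ ((1 + (cc a n : ℝ) + (m i : ℝ) + (n:ℝ)) * (1 + ε/2)
          + (1 + (-(ε/2) * ((n:ℝ) * (1 - a))) + (-(ε/2) * (m i : ℝ)))) := by
        rw [Real.rpow_le_rpow_left_iff one_lt_two]
        nlinarith [mul_nonneg (by linarith : (0:ℝ) ≤ ε/2)
          (by linarith : (0:ℝ) ≤ 1 + (cc a n : ℝ) + (n:ℝ) * a)]
    _ = (2 * hf a n m i / rr n) ^ (1 + ε/2)
          * (2 * (2:ℝ) ^ (-(ε/2) * ((n:ℝ) * (1 - a))) * ((2:ℝ) ^ (-(ε/2):ℝ)) ^ (m i)) := by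
        rw [e1, ← Real.rpow_natCast ((2:ℝ) ^ (-(ε/2):ℝ)) (m i),
          ← Real.rpow_mul (by norm_num : (0:ℝ) ≤ 2),
          ← Real.rpow_mul (by norm_num : (0:ℝ) ≤ 2)]
        simp only [Real.rpow_add two_pos, Real.rpow_one]
        try ring

lemma sum_bound (a ε : ℝ) (ha : 0 < a) (ha1 : a < 1) (hε : 0 < ε) (hd : 0 < d) :
    (∑' n : ℕ, ∑' m : Fin d → ℕ, ∏ i : Fin d,
      (ENNReal.ofReal (2 * (2:ℝ) ^ (-(ε/2) * ((n:ℝ) * (1 - a)))) *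
        (ENNReal.ofReal ((2:ℝ) ^ (-(ε/2) : ℝ))) ^ (m i))) ≠ ⊤ := by
  set q : ℝ≥0∞ := ENNReal.ofReal ((2:ℝ) ^ (-(ε/2) : ℝ)) with hq
  set Q : ℝ≥0∞ := ENNReal.ofReal ((2:ℝ) ^ (-(ε/2) * (1 - a))) with hQ
  have hq1 : q < 1 := ENNReal.ofReal_lt_one.2
    (Real.rpow_lt_one_of_one_lt_of_neg one_lt_two (by linarith))
  have hQ1 : Q < 1 := ENNReal.ofReal_lt_one.2
    (Real.rpow_lt_one_of_one_lt_of_neg one_lt_two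
      (by nlinarith [mul_pos (half_pos hε) (by linarith : (0:ℝ) < 1 - a)]))
  have hinner : ∀ n : ℕ, (∑' m : Fin d → ℕ, ∏ i : Fin d,
      (ENNReal.ofReal (2 * (2:ℝ) ^ (-(ε/2) * ((n:ℝ) * (1 - a)))) * q ^ (m i)))
      = (ENNReal.ofReal (2 * (2:ℝ) ^ (-(ε/2) * ((n:ℝ) * (1 - a)))) * (1 - q)⁻¹) ^ d := by
    intro n
    rw [tsum_pi_prod d
      (fun _ k => ENNReal.ofReal (2 * (2:ℝ) ^ (-(ε/2) * ((n:ℝ) * (1 - a)))) * q ^ k)]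
    have : (∑' k : ℕ, ENNReal.ofReal (2 * (2:ℝ) ^ (-(ε/2) * ((n:ℝ) * (1 - a)))) * q ^ k)
        = ENNReal.ofReal (2 * (2:ℝ) ^ (-(ε/2) * ((n:ℝ) * (1 - a)))) * (1 - q)⁻¹ := by
      rw [ENNReal.tsum_mul_left, ENNReal.tsum_geometric]
    rw [this, Finset.prod_const, Finset.card_univ, Fintype.card_fin]
  have hA : ∀ n : ℕ, ENNReal.ofReal (2 * (2:ℝ) ^ (-(ε/2) * ((n:ℝ) * (1 - a))))
      = ENNReal.ofReal 2 * Q ^ n := by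
    intro n
    rw [ENNReal.ofReal_mul (by norm_num), hQ,
      ← ENNReal.ofReal_pow (Real.rpow_nonneg (by norm_num) _),
      ← Real.rpow_natCast ((2:ℝ) ^ (-(ε/2) * (1 - a))) n,
      ← Real.rpow_mul (by norm_num : (0:ℝ) ≤ 2)]
    congr 2
    ring
  calc (∑' n : ℕ, ∑' m : Fin d → ℕ, ∏ i : Fin d,
      (ENNReal.ofReal (2 * (2:ℝ) ^ (-(ε/2) * ((n:ℝ) * (1 - a)))) * q ^ (m i)))
      = ∑' n : ℕ, (ENNReal.ofReal 2 * Q ^ n * (1 - q)⁻¹) ^ d := by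
        congr 1; funext n; rw [hinner n, hA n]
    _ = ∑' n : ℕ, (ENNReal.ofReal 2 * (1 - q)⁻¹) ^ d * (Q ^ d) ^ n := by
        congr 1; funext n
        rw [show ENNReal.ofReal 2 * Q ^ n * (1 - q)⁻¹
          = ENNReal.ofReal 2 * (1 - q)⁻¹ * Q ^ n by ring, mul_pow, ← pow_mul, mul_comm n d,
          pow_mul]
    _ = (ENNReal.ofReal 2 * (1 - q)⁻¹) ^ d * (1 - Q ^ d)⁻¹ := by
        rw [ENNReal.tsum_mul_left, ENNReal.tsum_geometric]
    _ ≠ ⊤ := by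
        apply ENNReal.mul_ne_top
        · apply ENNReal.pow_ne_top
          apply ENNReal.mul_ne_top ENNReal.ofReal_ne_top
          rw [ENNReal.inv_ne_top]
          exact (tsub_pos_of_lt hq1).ne'
        · rw [ENNReal.inv_ne_top]
          have : Q ^ d < 1 := pow_lt_one₀ zero_le hQ1 hd.ne'
          exact (tsub_pos_of_lt this).ne'

lemma discrete (a ε : ℝ) (ha : 0 < a) (ha1 : a < 1) (hε : 0 < ε) (hd : 0 < d)
    (ν : Measure (Fin d → ℝ)) [IsProbabilityMeasure ν] :
    ∀ᵐ x ∂ν, ∃ N : ℕ, ∀ n, N ≤ n → ∀ m : Fin d → ℕ,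
      ν (box x (hf a n m)) ≤ Mf a ε n m * ν (box x fun _ => rr n) := by
  have hsum : (∑' n : ℕ, ν {x | ∃ m : Fin d → ℕ,
      Mf a ε n m * ν (box x fun _ => rr n) < ν (box x (hf a n m))}) ≠ ⊤ := by
    apply ne_top_of_le_ne_top (sum_bound a ε ha ha1 hε hd)
    apply ENNReal.tsum_le_tsum
    intro n
    have : {x : Fin d → ℝ | ∃ m : Fin d → ℕ,
        Mf a ε n m * ν (box x fun _ => rr n) < ν (box x (hf a n m))}
        = ⋃ m : Fin d → ℕ,
          {x | Mf a ε n m * ν (box x fun _ => rr n) < ν (box x (hf a n m))} := by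
      ext x; simp [mem_iUnion]
    rw [this]
    exact (measure_iUnion_le _).trans
      (ENNReal.tsum_le_tsum fun m => claim1 a ε ha ha1.le hε ν n m)
  have h0 := measure_setOf_frequently_eq_zero (μ := ν) (p := fun n x => ∃ m : Fin d → ℕ,
      Mf a ε n m * ν (box x fun _ => rr n) < ν (box x (hf a n m))) hsum
  have hae : ∀ᵐ x ∂ν, x ∉ {x : Fin d → ℝ | ∃ᶠ n in atTop, ∃ m : Fin d → ℕ,
      Mf a ε n m * ν (box x fun _ => rr n) < ν (box x (hf a n m))} :=
    measure_eq_zero_iff_ae_notMem.1 h0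
  filter_upwards [hae] with x hx
  obtain ⟨N, hN⟩ := eventually_atTop.1 (not_frequently.1 hx)
  refine ⟨N, fun n hn m => ?_⟩
  have := hN n hn
  push_neg at this
  exact this m

lemma rr_eq (k : ℕ) : rr k = (1/2 : ℝ) ^ k := by
  rw [rr, Real.rpow_neg (by norm_num : (0:ℝ) ≤ 2), Real.rpow_natCast, one_div, inv_pow]

end Stmt2Aux

open Stmt2Aux

theorem stmt2 {d : ℕ} (a ε : ℝ) (ha : 0 < a) (ha1 : a < 1) (hε : 0 < ε)
    (ν : Measure (Fin d → ℝ)) [IsProbabilityMeasure ν] :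
    ∀ᵐ x ∂ν, ∃ r0 : ℝ, r0 ∈ Ioo (0 : ℝ) 1 ∧
      ∀ r : ℝ, 0 < r → r < r0 → ∀ h : Fin d → ℝ, (∀ i, r ^ a ≤ h i) →
        ν (univ.pi fun i => Icc (x i - h i) (x i + h i)) ≤
          ν (univ.pi fun i => Icc (x i - r) (x i + r)) *
            ∏ i, ENNReal.ofReal ((4 * h i / r) ^ (1 + ε)) := by
  classical
  rcases Nat.eq_zero_or_pos d with hd0 | hd
  · subst hd0
    refine Filter.Eventually.of_forall fun x => ⟨1/2, ⟨by norm_num, by norm_num⟩, ?_⟩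
    intro r hr hr0 h hh
    have huniv : ∀ g : Fin 0 → Set ℝ, univ.pi g = univ := by
      intro g
      apply eq_univ_of_forall
      intro y
      rw [mem_univ_pi]
      exact fun i => i.elim0
    rw [huniv, huniv]
    simp
  · filter_upwards [discrete a ε ha ha1 hε hd ν] with x hx
    obtain ⟨N, hN⟩ := hx
    set r1 : ℝ := (2:ℝ) ^ (-((1 + ε/2)/((1 - a) * (ε/2)))) with hr1def
    have hr1pos : 0 < r1 := Real.rpow_pos_of_pos two_pos _
    have hr1lt1 : r1 < 1 := by
      apply Real.rpow_lt_one_of_one_lt_of_neg one_lt_two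
      have : 0 < (1 + ε/2)/((1 - a) * (ε/2)) :=
        div_pos (by linarith) (mul_pos (by linarith) (by linarith))
      linarith
    refine ⟨min (rr N) r1, ⟨lt_min (rr_pos N) hr1pos, (min_le_right _ _).trans_lt hr1lt1⟩, ?_⟩
    intro r hr hrr0 h hh
    have hrlt1 : r < 1 := hrr0.trans_le ((min_le_right _ _).trans hr1lt1.le)
    have hrr1 : r ≤ r1 := (hrr0.trans_le (min_le_right _ _)).le
    have hrN : r < rr N := hrr0.trans_le (min_le_left _ _)
    -- find the dyadic scale n
    have hP : ∃ k : ℕ, rr k < r := by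
      obtain ⟨k, hk⟩ := exists_pow_lt_of_lt_one hr (by norm_num : (1/2 : ℝ) < 1)
      exact ⟨k, by rw [rr_eq]; exact hk⟩
    set n := Nat.find hP with hn
    have hfind : rr n < r := Nat.find_spec hP
    have hn0 : n ≠ 0 := by
      intro h0
      rw [h0, rr] at hfind
      simp [Real.rpow_zero] at hfind
      linarith
    have hr2ρ : r ≤ 2 * rr n := by
      have hlt : n - 1 < n := Nat.sub_lt (Nat.pos_of_ne_zero hn0) one_pos
      have := Nat.find_min hP hlt
      rw [not_lt] at this
      have hcast : ((n - 1 : ℕ) : ℝ) = (n : ℝ) - 1 := by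
        have h1n : 1 ≤ n := Nat.one_le_iff_ne_zero.2 hn0
        push_cast [h1n]
        ring
      have heq : rr (n - 1) = 2 * rr n := by
        have hsplit : (2:ℝ) * (2:ℝ) ^ (-(n:ℝ)) = (2:ℝ) ^ (1 + -(n:ℝ)) := by
          rw [Real.rpow_add two_pos, Real.rpow_one]
        rw [rr, rr, hsplit]
        congr 1
        rw [hcast]
        ring
      rw [heq] at this
      exact this
    have hNn : N ≤ n := by
      have : rr n < rr N := hfind.trans hrN
      rw [rr, rr, Real.rpow_lt_rpow_left_iff one_lt_two] at this
      have : (N : ℝ) < (n : ℝ) := by linarith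
      exact_mod_cast this.le
    have hρr : rr n ≤ r := hfind.le
    have hρpos := rr_pos n
    -- dyadic upper approximations of h
    have hhpos : ∀ i, 0 < h i := fun i =>
      lt_of_lt_of_le (Real.rpow_pos_of_pos hr a) (hh i)
    choose k hk using fun i => exists_mem_Ioc_zpow (hhpos i) (one_lt_two : (1:ℝ) < 2)
    have hki : ∀ i, cc a n ≤ k i + 1 := by
      intro i
      have s1 : (2:ℝ) ^ ((cc a n : ℝ)) ≤ rr n ^ a := by
        rw [rr, ← Real.rpow_mul (by norm_num : (0:ℝ) ≤ 2)]
        apply (Real.rpow_le_rpow_left_iff one_lt_two).2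
        have := hcc_le a n
        nlinarith
      have s2 : rr n ^ a ≤ r ^ a := Real.rpow_le_rpow hρpos.le hρr ha.le
      have s4 : h i ≤ (2:ℝ) ^ (k i + 1) := (hk i).2
      have s5 : ((2:ℝ) ^ (k i + 1) : ℝ) = (2:ℝ) ^ (((k i + 1 : ℤ)) : ℝ) :=
        (Real.rpow_intCast 2 (k i + 1)).symm
      have : (2:ℝ) ^ ((cc a n : ℝ)) ≤ (2:ℝ) ^ (((k i + 1 : ℤ) : ℝ)) := by
        rw [← s5]
        exact s1.trans (s2.trans ((hh i).trans s4))
      have := (Real.rpow_le_rpow_left_iff one_lt_two).1 this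
      exact_mod_cast this
    set m : Fin d → ℕ := fun i => (k i + 1 - cc a n).toNat with hm
    have hmval : ∀ i, (cc a n : ℤ) + (m i : ℤ) = k i + 1 := by
      intro i
      rw [hm]
      simp only
      rw [Int.toNat_of_nonneg (by linarith [hki i])]
      ring
    have hfeq : ∀ i, hf a n m i = (2:ℝ) ^ (k i + 1) := by
      intro i
      rw [hf, ← Real.rpow_intCast 2 (k i + 1), ← hmval i]
      congr 1
      push_cast
      ring
    -- main chain
    have step1 : ν (box x h) ≤ ν (box x (hf a n m)) := by
      apply measure_mono
      apply box_mono
      intro i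
      rw [hfeq i]
      exact (hk i).2
    have step2 := hN n hNn m
    have step3 : ν (box x fun _ => rr n) ≤ ν (box x fun _ => r) :=
      measure_mono (box_mono fun i => hρr)
    have hMle : Mf a ε n m ≤ ∏ i, ENNReal.ofReal ((4 * h i / r) ^ (1 + ε)) := by
      rw [Mf]
      apply Finset.prod_le_prod'
      intro i _
      apply ENNReal.ofReal_le_ofReal
      set t : ℝ := 4 * h i / r with ht
      have ht0 : 0 < t := div_pos (by linarith [hhpos i]) hr
      have hfle : hf a n m i ≤ 2 * h i := by
        rw [hfeq i, zpow_add₀ (two_ne_zero), zpow_one]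
        have := (hk i).1
        nlinarith [zpow_pos (two_pos : (0:ℝ) < 2) (k i)]
      have hA : 2 * hf a n m i / rr n ≤ 2 * t := by
        have h1 : 2 * hf a n m i ≤ 4 * h i := by linarith
        have h2 : r / 2 ≤ rr n := by linarith
        have h3 : 2 * hf a n m i / rr n ≤ (4 * h i) / (r / 2) :=
          div_le_div₀ (by linarith [hhpos i]) h1 (by linarith) h2
        have h4 : (4 * h i) / (r / 2) = 2 * t := by
          rw [ht]
          field_simp
        linarith
      have hB : (2 * hf a n m i / rr n) ^ (1 + ε/2) ≤ (2 * t) ^ (1 + ε/2) :=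
        Real.rpow_le_rpow
          (le_of_lt (div_pos (mul_pos two_pos (hf_pos a n m i)) hρpos)) hA (by linarith)
      have hC : (2 * t) ^ (1 + ε/2) = (2:ℝ) ^ ((1 + ε/2) : ℝ) * t ^ (1 + ε/2) :=
        Real.mul_rpow (by norm_num) ht0.le
      have htge : r ^ (a - 1) ≤ t := by
        have e1 : r ^ (a - 1) = r ^ a / r := by
          rw [Real.rpow_sub hr, Real.rpow_one]
        have e2 : r ^ a / r ≤ 4 * h i / r :=
          (div_le_div_iff_of_pos_right hr).2 (by linarith [hh i, hhpos i])
        rw [ht]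
        linarith [e2, e1.le]
      have hD : (2:ℝ) ^ ((1 + ε/2) : ℝ) ≤ t ^ (ε/2) := by
        have f1 : r1 ^ (a - 1) ≤ r ^ (a - 1) :=
          Real.rpow_le_rpow_of_nonpos hr hrr1 (by linarith)
        have f2 : r1 ^ (a - 1) = (2:ℝ) ^ (((1 + ε/2)/(ε/2)) : ℝ) := by
          rw [hr1def, ← Real.rpow_mul (by norm_num : (0:ℝ) ≤ 2)]
          congr 1
          have h1a : (1:ℝ) - a ≠ 0 := by linarith
          have he2 : ε ≠ 0 := hε.ne'
          field_simp
          ring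
        have f4 : ((2:ℝ) ^ (((1 + ε/2)/(ε/2)) : ℝ)) ^ (ε/2) ≤ t ^ (ε/2) := by
          apply Real.rpow_le_rpow (by positivity) ?_ (by linarith)
          rw [← f2]
          exact f1.trans htge
        calc (2:ℝ) ^ ((1 + ε/2) : ℝ)
            = ((2:ℝ) ^ (((1 + ε/2)/(ε/2)) : ℝ)) ^ (ε/2) := by
              rw [← Real.rpow_mul (by norm_num : (0:ℝ) ≤ 2)]
              congr 1
              have he2 : ε ≠ 0 := hε.ne'
              field_simp
          _ ≤ t ^ (ε/2) := f4
      calc (2 * hf a n m i / rr n) ^ (1 + ε/2)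
          ≤ (2:ℝ) ^ ((1 + ε/2) : ℝ) * t ^ (1 + ε/2) := by rw [← hC]; exact hB
        _ ≤ t ^ (ε/2) * t ^ (1 + ε/2) :=
            mul_le_mul_of_nonneg_right hD (Real.rpow_nonneg ht0.le _)
        _ = t ^ (1 + ε) := by
            rw [← Real.rpow_add ht0]
            congr 1
            ring
        _ = (4 * h i / r) ^ (1 + ε) := by rw [ht]
    calc ν (univ.pi fun i => Icc (x i - h i) (x i + h i))
        = ν (box x h) := rfl
      _ ≤ ν (box x (hf a n m)) := step1
      _ ≤ Mf a ε n m * ν (box x fun _ => rr n) := step2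
      _ ≤ Mf a ε n m * ν (box x fun _ => r) := mul_le_mul_right step3 _
      _ ≤ (∏ i, ENNReal.ofReal ((4 * h i / r) ^ (1 + ε))) * ν (box x fun _ => r) :=
          mul_le_mul_left hMle _
      _ = ν (univ.pi fun i => Icc (x i - r) (x i + r)) *
            ∏ i, ENNReal.ofReal ((4 * h i / r) ^ (1 + ε)) := mul_comm _ _
end

section
/- Let $N$ be a standard normal random variable, let $\rho>0$, $a\geq 0$, $0<\beta<1$, and let $0<r<c$ where $c=2^{-1/(1-\beta)}$. Then $\mathbb{P}\big(\rho N \in [a-r, a+r]\big) \leq C\, r^{\beta} (a+\rho^{\beta})^{-1}$ for some absolute constant $C$ (independent of $\rho$, $a$, $\beta$, $r$). -/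
open MeasureTheory ProbabilityTheory Real

lemma pdf01 (x : ℝ) : gaussianPDFReal 0 1 x = (Real.sqrt (2*Real.pi))⁻¹ * Real.exp (-x^2/2) := by
  simp [gaussianPDFReal]

lemma gauss_Icc_le (l u M : ℝ) (hM0 : 0 ≤ M)
    (hM : ∀ x ∈ Set.Icc l u, gaussianPDFReal 0 1 x ≤ M) :
    gaussianReal 0 1 (Set.Icc l u) ≤ ENNReal.ofReal ((u - l) * M) := by
  rw [gaussianReal_apply 0 one_ne_zero]
  calc ∫⁻ x in Set.Icc l u, gaussianPDF 0 1 x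
      ≤ ∫⁻ _ in Set.Icc l u, ENNReal.ofReal M := by
        refine setLIntegral_mono measurable_const fun x hx => ?_
        rw [gaussianPDF_def]
        exact ENNReal.ofReal_le_ofReal (hM x hx)
    _ = ENNReal.ofReal M * volume (Set.Icc l u) := setLIntegral_const _ _
    _ = ENNReal.ofReal ((u - l) * M) := by
        rw [Real.volume_Icc, ← ENNReal.ofReal_mul hM0, mul_comm]

lemma texp_le (t : ℝ) (ht : 0 ≤ t) : t * Real.exp (-(t^2)/8) ≤ 3 := by
  have h1 : t^2/8 + 1 ≤ Real.exp (t^2/8) := Real.add_one_le_exp _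
  have h2 : Real.exp (-(t^2)/8) * Real.exp (t^2/8) = 1 := by
    rw [← Real.exp_add, show -(t^2)/8 + t^2/8 = 0 by ring, Real.exp_zero]
  have h3 : 0 < Real.exp (-(t^2)/8) := Real.exp_pos _
  nlinarith [mul_le_mul_of_nonneg_left h1 h3.le, sq_nonneg (3*t - 4), sq_nonneg t,
    mul_nonneg ht h3.le]

lemma hsqrt2pi : (Real.sqrt (2*Real.pi))⁻¹ ≤ 1/2 := by
  have h2 : (2:ℝ) ≤ Real.sqrt (2*Real.pi) := by
    nlinarith [Real.sq_sqrt (show (0:ℝ) ≤ 2*Real.pi by positivity),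
      Real.sqrt_nonneg (2*Real.pi), Real.pi_gt_three]
  rw [show (1:ℝ)/2 = 2⁻¹ by norm_num]
  exact inv_anti₀ (by norm_num) h2

theorem stmt5 :
    ∃ C : ℝ, 0 < C ∧ ∀ ρ a β r : ℝ, 0 < ρ → 0 ≤ a → 0 < β → β < 1 →
      0 < r → r < (2 : ℝ) ^ (-(1 / (1 - β))) →
      (gaussianReal 0 1) {x | ρ * x ∈ Set.Icc (a - r) (a + r)} ≤
        ENNReal.ofReal (C * r ^ β / (a + ρ ^ β)) := by
  refine ⟨3, by norm_num, fun ρ a β r hρ ha hβ hβ1 hr hrc => ?_⟩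
  have h1β : 0 < 1 - β := by linarith
  have hset : {x | ρ * x ∈ Set.Icc (a - r) (a + r)}
      = Set.Icc ((a-r)/ρ) ((a+r)/ρ) := by
    ext x
    simp only [Set.mem_setOf_eq, Set.mem_Icc]
    rw [div_le_iff₀ hρ, le_div_iff₀ hρ]
    constructor <;> rintro ⟨h1, h2⟩ <;> constructor <;> nlinarith
  rw [hset]
  have hr1 : r < 1 := lt_trans hrc (Real.rpow_lt_one_of_one_lt_of_neg one_lt_two
    (by rw [neg_lt, neg_zero]; positivity))
  have hrβ : r ≤ r ^ β := by
    calc r = r ^ (1:ℝ) := (Real.rpow_one r).symm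
    _ ≤ r ^ β := Real.rpow_le_rpow_of_exponent_ge hr hr1.le hβ1.le
  have hrhalf : r ^ (1-β) ≤ 1/2 := by
    have heq : ((2:ℝ) ^ (-(1 / (1 - β)))) ^ (1-β) = 1/2 := by
      rw [← Real.rpow_mul (by norm_num : (0:ℝ) ≤ 2),
        show (-(1 / (1 - β))) * (1-β) = -1 by field_simp,
        Real.rpow_neg_one]
      norm_num
    calc r ^ (1-β) ≤ ((2:ℝ) ^ (-(1 / (1 - β)))) ^ (1-β) :=
          Real.rpow_le_rpow hr.le hrc.le h1β.le
      _ = 1/2 := heq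
  have hρβpos : 0 < ρ ^ β := Real.rpow_pos_of_pos hρ β
  have hrβpos : 0 < r ^ β := Real.rpow_pos_of_pos hr β
  have hden : 0 < a + ρ ^ β := by positivity
  have hul : (a+r)/ρ - (a-r)/ρ = 2*r/ρ := by field_simp; ring
  have boundB : gaussianReal 0 1 (Set.Icc ((a-r)/ρ) ((a+r)/ρ)) ≤ ENNReal.ofReal (r/ρ) := by
    refine le_trans (gauss_Icc_le _ _ ((Real.sqrt (2*Real.pi))⁻¹) (by positivity)
      fun x _ => ?_) (ENNReal.ofReal_le_ofReal ?_)
    · rw [pdf01]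
      refine mul_le_of_le_one_right (by positivity) ?_
      rw [← Real.exp_zero]
      exact Real.exp_le_exp.2 (by nlinarith [sq_nonneg x])
    · rw [hul]
      have h2r : 0 ≤ 2*r/ρ := by positivity
      calc 2*r/ρ * (Real.sqrt (2*Real.pi))⁻¹ ≤ 2*r/ρ * (1/2) :=
            mul_le_mul_of_nonneg_left hsqrt2pi h2r
        _ = r/ρ := by ring
  by_cases hsmall : a ≤ 2*r ∨ a ≤ ρ^β
  · rcases le_or_gt ρ r with hρr | hρr
    · refine le_trans prob_le_one ?_
      rw [← ENNReal.ofReal_one]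
      apply ENNReal.ofReal_le_ofReal
      rw [le_div_iff₀ hden]
      have hρβr : ρ^β ≤ r^β := Real.rpow_le_rpow hρ.le hρr hβ.le
      rcases hsmall with h | h <;> nlinarith
    · refine le_trans boundB (ENNReal.ofReal_le_ofReal ?_)
      rw [div_le_div_iff₀ hρ hden]
      have key : r * ρ^β ≤ r^β * ρ := by
        have h1 : r/ρ ≤ (r/ρ)^β := by
          calc r/ρ = (r/ρ) ^ (1:ℝ) := (Real.rpow_one _).symm
          _ ≤ (r/ρ)^β := Real.rpow_le_rpow_of_exponent_ge (by positivity)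
                (by rw [div_le_one hρ]; exact hρr.le) hβ1.le
        rw [Real.div_rpow hr.le hρ.le, div_le_div_iff₀ hρ hρβpos] at h1
        linarith
      rcases hsmall with h | h
      · nlinarith [key, mul_le_mul hrβ hρr.le hr.le hrβpos.le, mul_pos hr hρ]
      · nlinarith [key, mul_le_mul_of_nonneg_left h hr.le]
  · push_neg at hsmall
    obtain ⟨h2ra, hρβa⟩ := hsmall
    set l := (a-r)/ρ with hl
    set t := a/ρ with ht
    have hl0 : 0 < l := by
      apply div_pos _ hρ; linarith
    have ht0 : 0 ≤ t := by positivity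
    have hlt : t ≤ 2*l := by
      rw [ht, hl, show 2*((a-r)/ρ) = (2*(a-r))/ρ by ring]
      gcongr
      linarith
    have hexp1 : Real.exp (-l^2/2) ≤ Real.exp (-(t^2)/8) := by
      apply Real.exp_le_exp.2
      nlinarith [mul_le_mul hlt hlt ht0 (by positivity : (0:ℝ) ≤ 2*l)]
    have haE : a * Real.exp (-(t^2)/8) ≤ 3 * ρ := by
      have := texp_le t (by positivity)
      rw [ht, div_mul_eq_mul_div, div_le_iff₀ hρ] at this
      linarith
    refine le_trans (gauss_Icc_le _ _ ((Real.sqrt (2*Real.pi))⁻¹ * Real.exp (-l^2/2))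
      (by positivity) fun x hx => ?_) (ENNReal.ofReal_le_ofReal ?_)
    · rw [pdf01]
      refine mul_le_mul_of_nonneg_left (Real.exp_le_exp.2 ?_) (by positivity)
      have hxl : l ≤ x := hx.1
      nlinarith
    · rw [hul]
      have hstep1 : 2*r/ρ * ((Real.sqrt (2*Real.pi))⁻¹ * Real.exp (-l^2/2))
          ≤ r/ρ * Real.exp (-(t^2)/8) := by
        have h2r : 0 ≤ 2*r/ρ := by positivity
        have hE2 : (Real.sqrt (2*Real.pi))⁻¹ * Real.exp (-l^2/2)
            ≤ 1/2 * Real.exp (-(t^2)/8) :=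
          mul_le_mul hsqrt2pi hexp1 (Real.exp_pos _).le (by norm_num)
        calc 2*r/ρ * ((Real.sqrt (2*Real.pi))⁻¹ * Real.exp (-l^2/2))
            ≤ 2*r/ρ * (1/2 * Real.exp (-(t^2)/8)) :=
              mul_le_mul_of_nonneg_left hE2 h2r
          _ = r/ρ * Real.exp (-(t^2)/8) := by ring
      refine le_trans hstep1 ?_
      rw [div_mul_eq_mul_div, div_le_div_iff₀ hρ hden]
      have hrsplit : r^β * r^(1-β) = r := by
        rw [← Real.rpow_add hr, show β + (1-β) = 1 by ring, Real.rpow_one]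
      have hEpos : 0 < Real.exp (-(t^2)/8) := Real.exp_pos _
      have hkey : r^(1-β) * (a * Real.exp (-(t^2)/8)) ≤ 1/2 * (3*ρ) :=
        mul_le_mul hrhalf haE (by positivity) (by norm_num)
      have h1 : r * Real.exp (-(t^2)/8) * a ≤ 3/2 * (r^β * ρ) := by
        calc r * Real.exp (-(t^2)/8) * a
            = r^β * (r^(1-β) * (a * Real.exp (-(t^2)/8))) := by
              nth_rewrite 1 [← hrsplit]; ring
          _ ≤ r^β * (1/2*(3*ρ)) := mul_le_mul_of_nonneg_left hkey hrβpos.le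
          _ = 3/2 * (r^β * ρ) := by ring
      have h2 : r * Real.exp (-(t^2)/8) * ρ^β ≤ r * Real.exp (-(t^2)/8) * a :=
        mul_le_mul_of_nonneg_left hρβa.le (by positivity)
      linarith [h1, h2]
end

section
/- Let $A\subset\mathbb{R}^n$ be an analytic set. Then $\Dim A = \sup\{\Dim K : K\subset A \text{ compact}\}$, where $\Dim$ denotes packing dimension. -/
open MeasureTheory Filter
open scoped ENNReal

/-- The covering number of `E` by closed balls of radius `r`. -/
noncomputable def covN {X : Type*} [PseudoMetricSpace X] (E : Set X) (r : ℝ) : ℕ∞ :=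
  sInf ((fun S : Finset X => (S.card : ℕ∞)) ''
    {S | E ⊆ ⋃ x ∈ S, Metric.closedBall x r})

/-- The upper Minkowski (box-counting) dimension of a set. -/
noncomputable def uMDim {X : Type*} [PseudoMetricSpace X] (E : Set X) : ℝ≥0∞ :=
  Filter.limsup (fun r : ℝ =>
      if covN E r = ⊤ then (⊤ : ℝ≥0∞)
      else ENNReal.ofReal (Real.log ((covN E r).toNat) / Real.log (1 / r)))
    (nhdsWithin 0 (Set.Ioi 0))

/-- The packing dimension of a set, via countable covers. -/
noncomputable def packDim {X : Type*} [PseudoMetricSpace X] (E : Set X) : ℝ≥0∞ :=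
  ⨅ (c : ℕ → Set X) (_ : E ⊆ ⋃ i, c i), ⨆ i, uMDim (c i)

/-- The packing dimension of a measure. -/
noncomputable def packDimMeasure {X : Type*} [PseudoMetricSpace X] [MeasurableSpace X]
    (μ : Measure X) : ℝ≥0∞ :=
  ⨅ (E : Set X) (_ : MeasurableSet E) (_ : 0 < μ E), packDim E

section Basic
variable {X : Type*} [PseudoMetricSpace X] {E F : Set X} {r s : ℝ}

lemma covN_mono (h : E ⊆ F) (r : ℝ) : covN E r ≤ covN F r := by
  apply sInf_le_sInf
  apply Set.image_mono
  intro S hS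
  exact h.trans hS

lemma covN_le (S : Finset X) (hS : E ⊆ ⋃ x ∈ S, Metric.closedBall x r) :
    covN E r ≤ S.card :=
  sInf_le ⟨S, hS, rfl⟩

/-- the auxiliary function whose limsup is uMDim -/
noncomputable def mgf (E : Set X) (r : ℝ) : ℝ≥0∞ :=
  if covN E r = ⊤ then (⊤ : ℝ≥0∞)
  else ENNReal.ofReal (Real.log ((covN E r).toNat) / Real.log (1 / r))

lemma uMDim_eq_limsup (E : Set X) : uMDim E = Filter.limsup (mgf E) (nhdsWithin 0 (Set.Ioi 0)) := rfl

lemma mgf_mono (h : E ⊆ F) (r : ℝ) : mgf E r ≤ mgf F r := by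
  unfold mgf
  rcases eq_or_ne (covN F r) ⊤ with hF | hF
  · simp [hF]
  · have hE : covN E r ≠ ⊤ := fun h' => hF (top_le_iff.1 (h' ▸ covN_mono h r))
    rw [if_neg hE, if_neg hF]
    have hlogE : (0:ℝ) ≤ Real.log ((covN E r).toNat) := Real.log_natCast_nonneg _
    have hlogF : (0:ℝ) ≤ Real.log ((covN F r).toNat) := Real.log_natCast_nonneg _
    rcases le_or_gt (Real.log (1/r)) 0 with hr | hr
    · have : Real.log ((covN E r).toNat) / Real.log (1/r) ≤ 0 :=
        div_nonpos_iff.2 (Or.inl ⟨hlogE, hr⟩)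
      rw [ENNReal.ofReal_eq_zero.2 this]
      exact zero_le
    · apply ENNReal.ofReal_le_ofReal
      have hNN : (covN E r).toNat ≤ (covN F r).toNat :=
        ENat.toNat_le_toNat (covN_mono h r) hF
      have : Real.log ((covN E r).toNat) ≤ Real.log ((covN F r).toNat) := by
        rcases Nat.eq_zero_or_pos (covN E r).toNat with h0 | h0
        · rw [h0]; simpa using hlogF
        · exact Real.log_le_log (by exact_mod_cast h0) (by exact_mod_cast hNN)
      gcongr

lemma uMDim_mono (h : E ⊆ F) : uMDim E ≤ uMDim F := by
  rw [uMDim_eq_limsup, uMDim_eq_limsup]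
  exact Filter.limsup_le_limsup (Eventually.of_forall fun r => mgf_mono h r)

lemma packDim_mono (h : E ⊆ F) : packDim E ≤ packDim F := by
  apply le_iInf₂
  intro c hc
  exact iInf₂_le c (h.trans hc)

lemma packDim_le_uMDim (E : Set X) : packDim E ≤ uMDim E := by
  calc packDim E ≤ ⨆ _ : ℕ, uMDim E :=
        iInf₂_le (fun _ : ℕ => E) (by rw [Set.iUnion_const])
    _ = uMDim E := iSup_const

lemma covN_empty (r : ℝ) : covN (∅ : Set X) r = 0 := by
  refine le_antisymm ?_ (zero_le)
  have := covN_le (E := (∅ : Set X)) (r := r) ∅ (by simp)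
  simpa using this

lemma uMDim_empty : uMDim (∅ : Set X) = 0 := by
  rw [uMDim_eq_limsup]
  have : mgf (∅ : Set X) = fun _ : ℝ => (0 : ℝ≥0∞) := by
    funext r
    unfold mgf
    rw [covN_empty]
    simp
  rw [this]
  exact Filter.limsup_const 0

lemma packDim_empty : packDim (∅ : Set X) = 0 := by
  refine le_antisymm ?_ (zero_le)
  exact (packDim_le_uMDim _).trans (le_of_eq uMDim_empty)

lemma packDim_iUnion_le (A : ℕ → Set X) :
    packDim (⋃ i, A i) ≤ ⨆ i, packDim (A i) := by
  set t := ⨆ i, packDim (A i) with ht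
  apply ENNReal.le_of_forall_pos_le_add
  intro ε hε htlt
  have hlt : ∀ i, packDim (A i) < t + ε := fun i =>
    lt_of_le_of_lt (le_iSup (fun i => packDim (A i)) i)
      (ENNReal.lt_add_right htlt.ne (by exact_mod_cast hε.ne'))
  have hex : ∀ i, ∃ c : ℕ → Set X, (A i ⊆ ⋃ j, c j) ∧ ⨆ j, uMDim (c j) ≤ t + ε := by
    intro i
    have h := hlt i
    rw [packDim, iInf_lt_iff] at h
    obtain ⟨c, hc⟩ := h
    rw [iInf_lt_iff] at hc
    obtain ⟨hcov, hlt'⟩ := hc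
    exact ⟨c, hcov, hlt'.le⟩
  choose c hcov hbound using hex
  have hcover : (⋃ i, A i) ⊆ ⋃ k : ℕ, c (Nat.unpair k).1 (Nat.unpair k).2 := by
    intro x hx
    obtain ⟨i, hi⟩ := Set.mem_iUnion.1 hx
    obtain ⟨j, hj⟩ := Set.mem_iUnion.1 (hcov i hi)
    exact Set.mem_iUnion.2 ⟨Nat.pair i j, by simpa using hj⟩
  calc packDim (⋃ i, A i) ≤ ⨆ k : ℕ, uMDim (c (Nat.unpair k).1 (Nat.unpair k).2) := by
        rw [packDim]; exact iInf₂_le (fun k => c (Nat.unpair k).1 (Nat.unpair k).2) hcover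
    _ ≤ t + ε := by
        apply iSup_le
        intro k
        calc uMDim (c (Nat.unpair k).1 (Nat.unpair k).2)
            ≤ ⨆ j, uMDim (c (Nat.unpair k).1 j) :=
              le_iSup (fun j => uMDim (c (Nat.unpair k).1 j)) _
          _ ≤ t + ε := hbound _

lemma packDim_iUnion_le' {ι : Type*} [Countable ι] (A : ι → Set X) :
    packDim (⋃ i, A i) ≤ ⨆ i, packDim (A i) := by
  rcases isEmpty_or_nonempty ι with h | h
  · simp only [Set.iUnion_of_empty]
    rw [packDim_empty]
    exact zero_le
  · obtain ⟨e, he⟩ := exists_surjective_nat ι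
    calc packDim (⋃ i, A i) = packDim (⋃ k, A (e k)) := by rw [he.iUnion_comp]
      _ ≤ ⨆ k, packDim (A (e k)) := packDim_iUnion_le _
      _ ≤ ⨆ i, packDim (A i) := iSup_le fun k => le_iSup (fun i => packDim (A i)) (e k)

lemma packDim_union_le (E F : Set X) :
    packDim (E ∪ F) ≤ max (packDim E) (packDim F) := by
  rw [Set.union_eq_iUnion]
  refine (packDim_iUnion_le' _).trans (iSup_le fun b => ?_)
  cases b
  · exact le_max_right _ _
  · exact le_max_left _ _

end Basic

section Sep
variable {X : Type*} [PseudoMetricSpace X] {E : Set X} {r s : ℝ}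

lemma covN_closure (E : Set X) (r : ℝ) : covN (closure E) r = covN E r := by
  unfold covN
  have : {S : Finset X | closure E ⊆ ⋃ x ∈ S, Metric.closedBall x r}
      = {S : Finset X | E ⊆ ⋃ x ∈ S, Metric.closedBall x r} := by
    ext S
    have hcl : IsClosed (⋃ x ∈ S, Metric.closedBall x r) :=
      S.finite_toSet.isClosed_biUnion fun i _ => Metric.isClosed_closedBall
    exact ⟨fun h => subset_closure.trans h, fun h => hcl.closure_subset_iff.2 h⟩
  rw [this]

lemma uMDim_closure (E : Set X) : uMDim (closure E) = uMDim E := by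
  rw [uMDim_eq_limsup, uMDim_eq_limsup]
  congr 1
  funext r
  unfold mgf
  rw [covN_closure]

/-- Lower bound for covering numbers from separated sets. -/
lemma le_covN_of_separated (S : Finset X) (hSE : ↑S ⊆ E) (hs : 0 ≤ s)
    (hsep : ∀ x ∈ S, ∀ y ∈ S, x ≠ y → 2 * s < dist x y) :
    (S.card : ℕ∞) ≤ covN E s := by
  apply le_sInf
  rintro _ ⟨T, hT, rfl⟩
  show (S.card : ℕ∞) ≤ (T.card : ℕ∞)
  norm_cast
  classical
  set f : X → X := fun x =>
    if h : ∃ y, y ∈ T ∧ x ∈ Metric.closedBall y s then h.choose else x with hf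
  have hmem : ∀ x ∈ S, (∃ y, y ∈ T ∧ x ∈ Metric.closedBall y s) := by
    intro x hx
    have := hT (hSE hx)
    simpa using this
  have hfT : ∀ x ∈ S, f x ∈ T := by
    intro x hx
    rw [hf]
    simp only [dif_pos (hmem x hx)]
    exact (hmem x hx).choose_spec.1
  have hfb : ∀ x ∈ S, x ∈ Metric.closedBall (f x) s := by
    intro x hx
    rw [hf]
    simp only [dif_pos (hmem x hx)]
    exact (hmem x hx).choose_spec.2
  apply Finset.card_le_card_of_injOn f hfT
  intro x hx y hy hxy
  by_contra hne
  have h1 := hfb x hx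
  have h2 := hfb y hy
  rw [Metric.mem_closedBall] at h1 h2
  have : dist x y ≤ 2 * s := by
    calc dist x y ≤ dist x (f x) + dist (f x) y := dist_triangle _ _ _
      _ = dist x (f x) + dist y (f x) := by rw [dist_comm (f x) y]
      _ ≤ s + s := add_le_add h1 (hxy ▸ h2)
      _ = 2 * s := by ring
  exact absurd this (not_le.2 (hsep x hx y hy hne))

/-- Extraction of separated sets from covering numbers. -/
lemma exists_separated_of_covN (M : ℕ) (hr : 0 < r) (h : (M : ℕ∞) < covN E r) :
    ∃ S : Finset X, ↑S ⊆ E ∧ (∀ x ∈ S, ∀ y ∈ S, x ≠ y → r < dist x y) ∧ M < S.card := by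
  classical
  by_contra hcon
  push_neg at hcon
  set P : Set ℕ := {k | ∃ S : Finset X, ↑S ⊆ E ∧
    (∀ x ∈ S, ∀ y ∈ S, x ≠ y → r < dist x y) ∧ S.card = k} with hP
  have hP0 : (0 : ℕ) ∈ P := ⟨∅, by simp⟩
  have hPbdd : BddAbove P := by
    refine ⟨M, ?_⟩
    rintro k ⟨S, hS1, hS2, rfl⟩
    exact hcon S hS1 hS2
  obtain ⟨S, hS1, hS2, hScard⟩ := Nat.sSup_mem ⟨0, hP0⟩ hPbdd
  have hcover : E ⊆ ⋃ x ∈ S, Metric.closedBall x r := by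
    intro e he
    by_contra hne
    simp only [Set.mem_iUnion, Metric.mem_closedBall, not_exists] at hne
    have hsep' : ∀ x ∈ S, r < dist e x := by
      intro x hx
      have := hne x
      push_neg at this
      exact this hx
    have heS : e ∉ S := by
      intro heS
      have := hsep' e heS
      simp at this
      linarith
    have hnew : S.card + 1 ∈ P := by
      refine ⟨insert e S, ?_, ?_, by rw [Finset.card_insert_of_notMem heS]⟩
      · intro x hx
        rcases Finset.mem_insert.1 hx with rfl | hx
        · exact he
        · exact hS1 hx
      · intro x hx y hy hxy
        rcases Finset.mem_insert.1 hx with hx1 | hx2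
        · rcases Finset.mem_insert.1 hy with hy1 | hy2
          · exact absurd (hx1.trans hy1.symm) hxy
          · rw [hx1]
            exact hsep' y hy2
        · rcases Finset.mem_insert.1 hy with hy1 | hy2
          · rw [hy1, dist_comm]
            exact hsep' x hx2
          · exact hS2 x hx2 y hy2 hxy
    have := le_csSup hPbdd hnew
    rw [hScard] at this
    omega
  have hle : covN E r ≤ S.card := covN_le S hcover
  have : (M : ℕ∞) < (S.card : ℕ∞) := lt_of_lt_of_le h hle
  have : M < S.card := by exact_mod_cast this
  have := hcon S hS1 hS2
  omega

end Sep

section LogLemmas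
variable {X : Type*} [PseudoMetricSpace X]

/-- From `ofReal α < uMDim E`, extract arbitrarily small scales with large separated sets. -/
lemma exists_separated_of_lt_uMDim {E : Set X} {α : ℝ} (hα : 0 ≤ α)
    (h : ENNReal.ofReal α < uMDim E) {ρ : ℝ} (hρ : 0 < ρ) :
    ∃ r : ℝ, 0 < r ∧ r < ρ ∧ r < 1 ∧
      ∃ S : Finset X, ↑S ⊆ E ∧ (∀ x ∈ S, ∀ y ∈ S, x ≠ y → r < dist x y) ∧
        (1/r) ^ α < (S.card : ℝ) := by
  rw [uMDim_eq_limsup] at h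
  have hfreq : ∃ᶠ r in nhdsWithin 0 (Set.Ioi 0), ENNReal.ofReal α < mgf E r :=
    Filter.frequently_lt_of_lt_limsup (by isBoundedDefault) h
  have hU : Set.Ioo (0:ℝ) (min ρ 1) ∈ nhdsWithin 0 (Set.Ioi 0) :=
    Ioo_mem_nhdsGT_of_mem ⟨le_refl 0, lt_min hρ one_pos⟩
  obtain ⟨r, hmgf, hrU⟩ := (hfreq.and_eventually (eventually_of_mem hU fun x hx => hx)).exists
  obtain ⟨hr0, hrm⟩ := hrU
  have hrρ : r < ρ := lt_of_lt_of_le hrm (min_le_left _ _)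
  have hr1 : r < 1 := lt_of_lt_of_le hrm (min_le_right _ _)
  refine ⟨r, hr0, hrρ, hr1, ?_⟩
  have h1r : (1:ℝ) < 1/r := one_lt_one_div hr0 hr1
  have hlogr : 0 < Real.log (1/r) := Real.log_pos h1r
  have hx0 : (0:ℝ) < (1/r) ^ α := Real.rpow_pos_of_pos (by positivity) α
  unfold mgf at hmgf
  by_cases htop : covN E r = ⊤
  · set M := Nat.floor ((1/r) ^ α) with hM
    have hMlt : (M : ℕ∞) < covN E r := htop ▸ (WithTop.coe_lt_top M)
    obtain ⟨S, hS1, hS2, hS3⟩ := exists_separated_of_covN M hr0 hMlt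
    refine ⟨S, hS1, hS2, ?_⟩
    have := Nat.lt_floor_add_one ((1/r) ^ α)
    have : (1/r) ^ α < (M:ℝ) + 1 := this
    have hcard : (M:ℝ) + 1 ≤ (S.card : ℝ) := by exact_mod_cast hS3
    linarith
  · rw [if_neg htop] at hmgf
    set N := (covN E r).toNat with hN
    have hq : α < Real.log N / Real.log (1/r) :=
      (ENNReal.ofReal_lt_ofReal_iff_of_nonneg hα).1 hmgf
    have hmul : α * Real.log (1/r) < Real.log N := (lt_div_iff₀ hlogr).1 hq
    have hNpos : 0 < N := by
      rcases Nat.eq_zero_or_pos N with h0 | h0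
      · exfalso
        rw [h0] at hq
        simp only [Nat.cast_zero, Real.log_zero, zero_div] at hq
        linarith
      · exact h0
    have hlt : (1/r) ^ α < (N:ℝ) := by
      have hlog : Real.log ((1/r) ^ α) < Real.log N := by
        rw [Real.log_rpow (by positivity)]
        exact hmul
      exact (Real.log_lt_log_iff hx0 (by exact_mod_cast hNpos)).1 hlog
    have hMlt : ((N - 1 : ℕ) : ℕ∞) < covN E r := by
      rw [← ENat.coe_toNat htop]
      exact_mod_cast Nat.sub_lt hNpos one_pos
    obtain ⟨S, hS1, hS2, hS3⟩ := exists_separated_of_covN (N-1) hr0 hMlt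
    refine ⟨S, hS1, hS2, ?_⟩
    have : N ≤ S.card := by omega
    calc (1/r) ^ α < (N:ℝ) := hlt
      _ ≤ (S.card : ℝ) := by exact_mod_cast this

/-- Lower bound on `uMDim` from covering number lower bounds at arbitrarily small scales. -/
lemma le_uMDim_of_covN {F : Set X} {α C : ℝ} (hα : 0 ≤ α) (hC : 0 < C)
    (H : ∀ ρ : ℝ, 0 < ρ → ∃ s : ℝ, 0 < s ∧ s < ρ ∧
      (covN F s = ⊤ ∨ (1/(C * s)) ^ α ≤ (((covN F s).toNat : ℕ) : ℝ))) :
    ENNReal.ofReal α ≤ uMDim F := by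
  rcases eq_or_lt_of_le hα with hα0 | hαpos
  · simp [← hα0]
  suffices hsuff : ∀ ε : ℝ, 0 < ε → ε ≤ α → ENNReal.ofReal (α - ε) ≤ uMDim F by
    apply le_of_forall_lt
    intro c hc
    have hcne : c ≠ ⊤ := hc.ne_top
    have hcr : c.toReal < α := (ENNReal.lt_ofReal_iff_toReal_lt hcne).1 hc
    set ε := min α ((α - c.toReal)/2) with hε
    have hε0 : 0 < ε := lt_min hαpos (by linarith [ENNReal.toReal_nonneg (a := c)])
    have hεα : ε ≤ α := min_le_left _ _
    have h2 : c.toReal < α - ε := by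
      have h3 : ε ≤ (α - c.toReal)/2 := min_le_right _ _
      have := ENNReal.toReal_nonneg (a := c)
      linarith
    calc c < ENNReal.ofReal (α - ε) := (ENNReal.lt_ofReal_iff_toReal_lt hcne).2 h2
      _ ≤ uMDim F := hsuff ε hε0 hεα
  intro ε hε0 hεα
  rw [uMDim_eq_limsup]
  apply Filter.le_limsup_of_frequently_le ?_ (by isBoundedDefault)
  rw [Filter.frequently_iff]
  intro U hU
  obtain ⟨u, hu, hIoo⟩ := mem_nhdsGT_iff_exists_Ioo_subset.1 hU
  set s₀ := min (1/2 : ℝ) (Real.exp (-(α * Real.log C)/ε)) with hs₀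
  have hs₀pos : 0 < s₀ := lt_min (by norm_num) (Real.exp_pos _)
  set ρ := min u s₀ with hρ
  have hρpos : 0 < ρ := lt_min hu hs₀pos
  obtain ⟨s, hs0, hsρ, hprop⟩ := H ρ hρpos
  have hsU : s ∈ U := hIoo ⟨hs0, lt_of_lt_of_le hsρ (min_le_left _ _)⟩
  refine ⟨s, hsU, ?_⟩
  have hss₀ : s < s₀ := lt_of_lt_of_le hsρ (min_le_right _ _)
  have hs12 : s < 1/2 := lt_of_lt_of_le hss₀ (min_le_left _ _)
  have hlogs : 0 < Real.log (1/s) := Real.log_pos (by rw [lt_div_iff₀ hs0]; linarith)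
  have hcorr : α * Real.log C ≤ ε * Real.log (1/s) := by
    have hsexp : s ≤ Real.exp (-(α * Real.log C)/ε) := le_of_lt
      (lt_of_lt_of_le hss₀ (min_le_right _ _))
    have hlog : Real.log s ≤ -(α * Real.log C)/ε := by
      calc Real.log s ≤ Real.log (Real.exp (-(α * Real.log C)/ε)) :=
            Real.log_le_log hs0 hsexp
        _ = -(α * Real.log C)/ε := Real.log_exp _
    have h1 : Real.log (1/s) = -Real.log s := by
      rw [Real.log_div one_ne_zero (ne_of_gt hs0), Real.log_one]
      ring
    rw [h1]
    have := mul_le_mul_of_nonneg_left hlog hε0.le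
    rw [mul_div_cancel₀ _ (ne_of_gt hε0)] at this
    -- this : ε * Real.log s ≤ -(α * Real.log C)
    linarith
  unfold mgf
  by_cases htop : covN F s = ⊤
  · rw [if_pos htop]
    exact le_top
  · rw [if_neg htop]
    rcases hprop with htop' | hbound
    · exact absurd htop' htop
    set N := (covN F s).toNat with hN
    have hCs : (0:ℝ) < 1/(C * s) := by positivity
    have hpow : (0:ℝ) < (1/(C*s)) ^ α := Real.rpow_pos_of_pos hCs α
    have hNpos : (0:ℝ) < (N:ℝ) := lt_of_lt_of_le hpow hbound
    have hlogN : α * (Real.log (1/s) - Real.log C) ≤ Real.log N := by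
      have h1 : Real.log ((1/(C*s)) ^ α) ≤ Real.log N :=
        Real.log_le_log hpow hbound
      rw [Real.log_rpow hCs] at h1
      have h2 : Real.log (1/(C*s)) = Real.log (1/s) - Real.log C := by
        rw [one_div, mul_inv, Real.log_mul (by positivity) (by positivity),
          Real.log_inv, Real.log_inv, one_div, Real.log_inv]
        ring
      rw [h2] at h1
      exact h1
    apply ENNReal.ofReal_le_ofReal
    rw [le_div_iff₀ hlogs]
    have hαL : α * Real.log C ≤ ε * Real.log (1/s) := hcorr
    nlinarith [hlogN]

end LogLemmas

section Baire
variable {X : Type*} [MetricSpace X] [CompleteSpace X]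

lemma baire_packDim {K : Set X} (hK : IsCompact K) (hne : K.Nonempty) {α : ℝ≥0∞}
    (h : ∀ V : Set X, IsOpen V → (K ∩ V).Nonempty → α ≤ uMDim (K ∩ V)) :
    α ≤ packDim K := by
  rw [packDim]
  apply le_iInf₂
  intro c hc
  haveI : CompleteSpace ↥K := hK.isClosed.completeSpace_coe
  haveI : Nonempty ↥K := hne.to_subtype
  set g : ℕ → Set ↥K := fun i => Subtype.val ⁻¹' (closure (c i)) with hg
  have hgc : ∀ i, IsClosed (g i) := fun i => isClosed_closure.preimage continuous_subtype_val
  have hgu : ⋃ i, g i = Set.univ := by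
    ext x
    simp only [Set.mem_iUnion, Set.mem_univ, iff_true]
    obtain ⟨i, hi⟩ := Set.mem_iUnion.1 (hc x.2)
    exact ⟨i, subset_closure hi⟩
  obtain ⟨i, hint⟩ := nonempty_interior_of_iUnion_of_closed hgc hgu
  obtain ⟨x, hx⟩ := hint
  have hmem : g i ∈ nhds x := mem_interior_iff_mem_nhds.1 hx
  rw [nhds_subtype] at hmem
  obtain ⟨V, hV, hVsub⟩ := Filter.mem_comap.1 hmem
  obtain ⟨W, hWV, hWopen, hxW⟩ := mem_nhds_iff.1 hV
  have hKW : (K ∩ W).Nonempty := ⟨↑x, x.2, hxW⟩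
  have hsub : K ∩ W ⊆ closure (c i) := by
    rintro z ⟨hzK, hzW⟩
    exact hVsub (show (⟨z, hzK⟩ : ↥K) ∈ Subtype.val ⁻¹' V from hWV hzW)
  calc α ≤ uMDim (K ∩ W) := h W hWopen hKW
    _ ≤ uMDim (closure (c i)) := uMDim_mono hsub
    _ = uMDim (c i) := uMDim_closure _
    _ ≤ ⨆ j, uMDim (c j) := le_iSup (fun j => uMDim (c j)) i

end Baire

section Cyl

/-- Cylinder set determined by a finite sequence. -/
def cyl (σ : List ℕ) : Set (ℕ → ℕ) := {y | ∀ i, i < σ.length → y i = σ.getD i 0}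

/-- Finite prefix of an infinite sequence. -/
def pre (y : ℕ → ℕ) (m : ℕ) : List ℕ := List.ofFn (fun i : Fin m => y i)

lemma cyl_nil : cyl [] = Set.univ := by
  ext y
  simp [cyl]

lemma mem_cyl_getD (σ : List ℕ) : (fun i => σ.getD i 0) ∈ cyl σ := fun _ _ => rfl

lemma cyl_nonempty (σ : List ℕ) : (cyl σ).Nonempty := ⟨_, mem_cyl_getD σ⟩

lemma pre_length (y : ℕ → ℕ) (m : ℕ) : (pre y m).length = m := by simp [pre]

lemma pre_getD {i m : ℕ} (y : ℕ → ℕ) (h : i < m) : (pre y m).getD i 0 = y i := by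
  rw [pre, List.getD_eq_getElem _ _ (by simpa using h)]
  simp

lemma mem_cyl_pre (y : ℕ → ℕ) (m : ℕ) : y ∈ cyl (pre y m) := by
  intro i hi
  rw [pre_length] at hi
  rw [pre_getD y hi]

lemma cyl_pre_subset {y : ℕ → ℕ} {σ : List ℕ} (hy : y ∈ cyl σ) {m : ℕ}
    (hm : σ.length ≤ m) : cyl (pre y m) ⊆ cyl σ := by
  intro z hz i hi
  have him : i < m := lt_of_lt_of_le hi hm
  have h1 : z i = y i := by
    have := hz i (by rwa [pre_length])
    rwa [pre_getD y him] at this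
  rw [h1]
  exact hy i hi

lemma cyl_pre_mono (y : ℕ → ℕ) {m m' : ℕ} (h : m ≤ m') :
    cyl (pre y m') ⊆ cyl (pre y m) :=
  cyl_pre_subset (mem_cyl_pre y m) (by rwa [pre_length])

lemma isClosed_cyl (σ : List ℕ) : IsClosed (cyl σ) := by
  have : cyl σ = ⋂ (i : ℕ) (_ : i < σ.length), (fun y : ℕ → ℕ => y i) ⁻¹' {σ.getD i 0} := by
    ext y
    simp [cyl]
  rw [this]
  exact isClosed_iInter fun i => isClosed_iInter fun _ =>
    (isClosed_singleton).preimage (continuous_apply i)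

lemma exists_cyl_pre_subset {y : ℕ → ℕ} {U : Set (ℕ → ℕ)} (hU : U ∈ nhds y) :
    ∃ m, cyl (pre y m) ⊆ U := by
  rw [nhds_pi] at hU
  obtain ⟨I, hIfin, V, hV, hsub⟩ := Filter.mem_pi.1 hU
  have hVy : ∀ i, y i ∈ V i := by
    intro i
    have := hV i
    rwa [nhds_discrete, Filter.mem_pure] at this
  obtain ⟨m, hm⟩ : ∃ m : ℕ, ∀ i ∈ I, i < m := by
    rcases hIfin.bddAbove with ⟨b, hb⟩
    exact ⟨b + 1, fun i hi => Nat.lt_succ_of_le (hb hi)⟩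
  refine ⟨m, fun z hz => hsub ?_⟩
  intro i hi
  have : z i = y i := by
    have := hz i (by rw [pre_length]; exact hm i hi)
    rwa [pre_getD y (hm i hi)] at this
  rw [this]
  exact hVy i

lemma image_cyl_pre_small {Z : Type*} [PseudoMetricSpace Z] {f : (ℕ → ℕ) → Z}
    (hf : Continuous f) (y : ℕ → ℕ) {ε : ℝ} (hε : 0 < ε) :
    ∃ m, f '' cyl (pre y m) ⊆ Metric.closedBall (f y) ε := by
  have hU : f ⁻¹' Metric.closedBall (f y) ε ∈ nhds y :=
    hf.continuousAt (Metric.closedBall_mem_nhds _ hε)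
  obtain ⟨m, hm⟩ := exists_cyl_pre_subset hU
  exact ⟨m, Set.image_subset_iff.2 hm⟩

end Cyl

section Construction
variable {n : ℕ}

/-- Image of a cylinder. -/
def Aset (f : (ℕ → ℕ) → (Fin n → ℝ)) (σ : List ℕ) : Set (Fin n → ℝ) := f '' cyl σ

/-- A finite sequence is good if its cylinder image has large packing dimension. -/
def good (f : (ℕ → ℕ) → (Fin n → ℝ)) (α : ℝ) (σ : List ℕ) : Prop :=
  ENNReal.ofReal α < packDim (Aset f σ)

/-- Union of all bad cylinder images. -/
def badU (f : (ℕ → ℕ) → (Fin n → ℝ)) (α : ℝ) : Set (Fin n → ℝ) :=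
  ⋃ (σ : {σ : List ℕ // ¬ good f α σ}), Aset f σ.1

lemma packDim_badU_le (f : (ℕ → ℕ) → (Fin n → ℝ)) (α : ℝ) :
    packDim (badU f α) ≤ ENNReal.ofReal α :=
  (packDim_iUnion_le' _).trans (iSup_le fun σ => not_lt.1 σ.2)

lemma core_uMDim {f : (ℕ → ℕ) → (Fin n → ℝ)} {α : ℝ} {σ : List ℕ} (hσ : good f α σ) :
    ENNReal.ofReal α < uMDim (Aset f σ \ badU f α) := by
  have hsub : Aset f σ ⊆ (Aset f σ \ badU f α) ∪ badU f α := by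
    intro x hx
    by_cases hb : x ∈ badU f α
    · exact Or.inr hb
    · exact Or.inl ⟨hx, hb⟩
  have h1 : packDim (Aset f σ) ≤ max (packDim (Aset f σ \ badU f α)) (packDim (badU f α)) :=
    (packDim_mono hsub).trans (packDim_union_le _ _)
  have h2 : ENNReal.ofReal α < packDim (Aset f σ \ badU f α) := by
    by_contra hc
    push_neg at hc
    have hle : packDim (Aset f σ) ≤ ENNReal.ofReal α :=
      h1.trans (max_le hc (packDim_badU_le f α))
    exact absurd (hσ.trans_le hle) (lt_irrefl _)
  exact lt_of_lt_of_le h2 (packDim_le_uMDim _)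

lemma core_mem {f : (ℕ → ℕ) → (Fin n → ℝ)} {α : ℝ} {σ : List ℕ} {x : Fin n → ℝ}
    (hx : x ∈ Aset f σ \ badU f α) :
    ∃ y ∈ cyl σ, f y = x ∧ ∀ m, good f α (pre y m) := by
  obtain ⟨⟨y, hy, rfl⟩, hb⟩ := hx
  refine ⟨y, hy, rfl, fun m => ?_⟩
  by_contra hbad
  exact hb (Set.mem_iUnion.2 ⟨⟨pre y m, hbad⟩, ⟨y, mem_cyl_pre y m, rfl⟩⟩)

/-- The property packaged by one refinement step. -/
def StepProp (f : (ℕ → ℕ) → (Fin n → ℝ)) (α : ℝ) (σ : List ℕ) (m : ℕ)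
    (r : ℝ) (J : Finset (List ℕ)) : Prop :=
  0 < r ∧ r < (1/2)^m ∧ (1/r) ^ α < (J.card : ℝ) ∧
  (∀ τ ∈ J, good f α τ ∧ cyl τ ⊆ cyl σ ∧ σ.length < τ.length ∧
      ∃ x₀, Aset f τ ⊆ Metric.closedBall x₀ (r/8)) ∧
  (∀ τ₁ ∈ J, ∀ τ₂ ∈ J, τ₁ ≠ τ₂ →
    ∀ p ∈ Aset f τ₁, ∀ q ∈ Aset f τ₂, r/2 < dist p q)

lemma step_exists {f : (ℕ → ℕ) → (Fin n → ℝ)} (hf : Continuous f) {α : ℝ} (hα : 0 < α)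
    {σ : List ℕ} (hσ : good f α σ) (m : ℕ) :
    ∃ r J, StepProp f α σ m r J := by
  classical
  have hcore := core_uMDim hσ
  obtain ⟨r, hr0, hrρ, hr1, S, hSE, hsep, hcard⟩ :=
    exists_separated_of_lt_uMDim hα.le hcore (by positivity : (0:ℝ) < (1/2)^m)
  have hchoice : ∀ x ∈ S, ∃ τ : List ℕ, good f α τ ∧ cyl τ ⊆ cyl σ ∧
      σ.length < τ.length ∧ x ∈ Aset f τ ∧ Aset f τ ⊆ Metric.closedBall x (r/8) := by
    intro x hx
    obtain ⟨y, hy, hfy, hgood⟩ := core_mem (hSE hx)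
    obtain ⟨m₁, hm₁⟩ := image_cyl_pre_small hf y (by positivity : (0:ℝ) < r/8)
    set mx := max m₁ (σ.length + 1) with hmx
    refine ⟨pre y mx, hgood mx, cyl_pre_subset hy (by omega), ?_, ?_, ?_⟩
    · rw [pre_length]; omega
    · exact ⟨y, mem_cyl_pre y mx, hfy⟩
    · calc Aset f (pre y mx) = f '' cyl (pre y mx) := rfl
        _ ⊆ f '' cyl (pre y m₁) := Set.image_mono (cyl_pre_mono y (le_max_left _ _))
        _ ⊆ Metric.closedBall (f y) (r/8) := hm₁
        _ = Metric.closedBall x (r/8) := by rw [hfy]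
  set g : {x // x ∈ S} → List ℕ := fun t => (hchoice t.1 t.2).choose with hg
  have hgspec : ∀ t : {x // x ∈ S}, good f α (g t) ∧ cyl (g t) ⊆ cyl σ ∧
      σ.length < (g t).length ∧ t.1 ∈ Aset f (g t) ∧
      Aset f (g t) ⊆ Metric.closedBall t.1 (r/8) := fun t => (hchoice t.1 t.2).choose_spec
  have hginj : ∀ t₁ t₂ : {x // x ∈ S}, g t₁ = g t₂ → t₁ = t₂ := by
    intro t₁ t₂ hgt
    by_contra hne
    have hne' : t₁.1 ≠ t₂.1 := fun h => hne (Subtype.ext h)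
    have hd := hsep t₁.1 t₁.2 t₂.1 t₂.2 hne'
    have h1 : t₁.1 ∈ Metric.closedBall t₂.1 (r/8) := (hgspec t₂).2.2.2.2 (hgt ▸ (hgspec t₁).2.2.2.1)
    rw [Metric.mem_closedBall] at h1
    linarith
  set J : Finset (List ℕ) := S.attach.image g with hJ
  have hJcard : J.card = S.card := by
    rw [hJ, Finset.card_image_of_injective _ (fun a b h => hginj a b h), Finset.card_attach]
  have hJmem : ∀ τ ∈ J, ∃ t : {x // x ∈ S}, g t = τ := by
    intro τ hτ
    obtain ⟨t, _, ht⟩ := Finset.mem_image.1 hτ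
    exact ⟨t, ht⟩
  refine ⟨r, J, hr0, hrρ, by rw [hJcard]; exact hcard, ?_, ?_⟩
  · intro τ hτ
    obtain ⟨t, rfl⟩ := hJmem τ hτ
    obtain ⟨h1, h2, h3, _, h5⟩ := hgspec t
    exact ⟨h1, h2, h3, t.1, h5⟩
  · intro τ₁ hτ₁ τ₂ hτ₂ hne p hp q hq
    obtain ⟨t₁, rfl⟩ := hJmem τ₁ hτ₁
    obtain ⟨t₂, rfl⟩ := hJmem τ₂ hτ₂
    have hne' : t₁.1 ≠ t₂.1 := by
      intro h
      exact hne (congrArg g (Subtype.ext h))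
    have hd := hsep t₁.1 t₁.2 t₂.1 t₂.2 hne'
    have h1 : dist p t₁.1 ≤ r/8 := by
      have := (hgspec t₁).2.2.2.2 hp
      rwa [Metric.mem_closedBall] at this
    have h2 : dist q t₂.1 ≤ r/8 := by
      have := (hgspec t₂).2.2.2.2 hq
      rwa [Metric.mem_closedBall] at this
    have := dist_triangle4 t₁.1 p q t₂.1
    rw [dist_comm t₁.1 p] at this
    linarith

end Construction

section Tree
variable {n : ℕ} (f : (ℕ → ℕ) → (Fin n → ℝ)) (hf : Continuous f) (α : ℝ) (hα : 0 < α)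

open Classical in
/-- Chosen step data (radius, children) at a node. -/
noncomputable def cD (σ : List ℕ) (m : ℕ) : ℝ × Finset (List ℕ) :=
  if hσ : good f α σ then
    ⟨(step_exists hf hα hσ m).choose, (step_exists hf hα hσ m).choose_spec.choose⟩
  else (0, ∅)

lemma cD_spec {σ : List ℕ} (hσ : good f α σ) (m : ℕ) :
    StepProp f α σ m (cD f hf α hα σ m).1 (cD f hf α hα σ m).2 := by
  rw [cD, dif_pos hσ]
  exact (step_exists hf hα hσ m).choose_spec.choose_spec

/-- The tree levels. -/
noncomputable def T : ℕ → Finset (List ℕ)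
  | 0 => {[]}
  | (m+1) => (T m).biUnion (fun σ => (cD f hf α hα σ m).2)

lemma T_good (hroot : good f α []) : ∀ m, ∀ σ ∈ T f hf α hα m, good f α σ ∧ m ≤ σ.length := by
  intro m
  induction m with
  | zero =>
    intro σ hσ
    rw [T, Finset.mem_singleton] at hσ
    subst hσ
    exact ⟨hroot, by simp⟩
  | succ m ih =>
    intro σ hσ
    rw [T, Finset.mem_biUnion] at hσ
    obtain ⟨π, hπ, hσc⟩ := hσ
    obtain ⟨hπg, hπl⟩ := ih π hπ
    have hspec := cD_spec f hf α hα hπg m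
    obtain ⟨hg, _, hlen, _⟩ := hspec.2.2.2.1 σ hσc
    exact ⟨hg, by omega⟩

lemma cD_card_pos {σ : List ℕ} (hσ : good f α σ) (m : ℕ) :
    0 < (cD f hf α hα σ m).2.card := by
  have hspec := cD_spec f hf α hα hσ m
  have h1 : (0:ℝ) < (1/(cD f hf α hα σ m).1) ^ α :=
    Real.rpow_pos_of_pos (one_div_pos.2 hspec.1) α
  have h2 := hspec.2.2.1
  by_contra hc
  push_neg at hc
  have h0 : (cD f hf α hα σ m).2.card = 0 := by omega
  rw [h0] at h2
  push_cast at h2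
  linarith

lemma T_child_mem {σ : List ℕ} {m : ℕ} (hσ : σ ∈ T f hf α hα m) {τ : List ℕ}
    (hτ : τ ∈ (cD f hf α hα σ m).2) : τ ∈ T f hf α hα (m+1) := by
  rw [T, Finset.mem_biUnion]
  exact ⟨σ, hσ, hτ⟩

lemma T_descend (hroot : good f α []) : ∀ m, ∀ σ ∈ T f hf α hα m, ∀ m', m ≤ m' →
    ∃ τ ∈ T f hf α hα m', cyl τ ⊆ cyl σ := by
  intro m σ hσ m' hm'
  induction m' with
  | zero =>
    have : m = 0 := by omega
    subst this
    exact ⟨σ, hσ, subset_rfl⟩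
  | succ m' ih =>
    rcases Nat.lt_or_ge m (m'+1) with hlt | hge
    · have hm'' : m ≤ m' := by omega
      obtain ⟨τ, hτ, hcyl⟩ := ih hm''
      have hτg := (T_good f hf α hα hroot m' τ hτ).1
      have hspec := cD_spec f hf α hα hτg m'
      obtain ⟨τ', hτ'⟩ := Finset.card_pos.1 (cD_card_pos f hf α hα hτg m')
      refine ⟨τ', T_child_mem f hf α hα hτ hτ', ?_⟩
      exact ((hspec.2.2.2.1 τ' hτ').2.1).trans hcyl
    · have : m = m' + 1 := by omega
      subst this
      exact ⟨σ, hσ, subset_rfl⟩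

lemma T_ancestor (hroot : good f α []) : ∀ m', ∀ τ ∈ T f hf α hα m', ∀ m, m ≤ m' →
    ∃ σ ∈ T f hf α hα m, cyl τ ⊆ cyl σ := by
  intro m'
  induction m' with
  | zero =>
    intro τ hτ m hm
    have : m = 0 := by omega
    subst this
    exact ⟨τ, hτ, subset_rfl⟩
  | succ m' ih =>
    intro τ hτ m hm
    rcases le_or_gt m m' with hle | hgt
    · rw [T, Finset.mem_biUnion] at hτ
      obtain ⟨π, hπ, hτc⟩ := hτ
      have hπg := (T_good f hf α hα hroot m' π hπ).1
      have hcyl : cyl τ ⊆ cyl π :=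
        ((cD_spec f hf α hα hπg m').2.2.2.1 τ hτc).2.1
      obtain ⟨σ, hσ, hcyl2⟩ := ih π hπ m hle
      exact ⟨σ, hσ, hcyl.trans hcyl2⟩
    · have : m = m' + 1 := by omega
      subst this
      exact ⟨τ, hτ, subset_rfl⟩

/-- The set of branches through the tree. -/
def Ybr : Set (ℕ → ℕ) := {y | ∀ m, ∃ σ ∈ T f hf α hα m, y ∈ cyl σ}

lemma branch_exists (hroot : good f α []) : ∀ m, ∀ σ ∈ T f hf α hα m, ∃ y ∈ Ybr f hf α hα, y ∈ cyl σ := by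
  intro m σ hσ
  have hex : ∀ σ' m', σ' ∈ T f hf α hα m' →
      ∃ τ, τ ∈ (cD f hf α hα σ' m').2 ∧ τ ∈ T f hf α hα (m'+1) := by
    intro σ' m' hσ'
    have hg := (T_good f hf α hα hroot m' σ' hσ').1
    obtain ⟨τ, hτ⟩ := Finset.card_pos.1 (cD_card_pos f hf α hα hg m')
    exact ⟨τ, hτ, T_child_mem f hf α hα hσ' hτ⟩
  let c : (k : ℕ) → {σ' : List ℕ // σ' ∈ T f hf α hα (m + k)} := fun k =>
    Nat.rec (motive := fun k => {σ' : List ℕ // σ' ∈ T f hf α hα (m + k)})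
      ⟨σ, hσ⟩
      (fun k prev => ⟨(hex prev.1 (m+k) prev.2).choose,
        (hex prev.1 (m+k) prev.2).choose_spec.2⟩) k
  have hstep : ∀ k, cyl (c (k+1)).1 ⊆ cyl (c k).1 := by
    intro k
    have hg := (T_good f hf α hα hroot (m+k) (c k).1 (c k).2).1
    have hmem : (c (k+1)).1 ∈ (cD f hf α hα (c k).1 (m+k)).2 :=
      (hex (c k).1 (m+k) (c k).2).choose_spec.1
    exact ((cD_spec f hf α hα hg (m+k)).2.2.2.1 _ hmem).2.1
  have hchain : ∀ a b, a ≤ b → cyl (c b).1 ⊆ cyl (c a).1 := by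
    intro a b hab
    induction b with
    | zero =>
      have : a = 0 := by omega
      subst this
      exact subset_rfl
    | succ b ih =>
      rcases Nat.lt_or_ge a (b+1) with h1 | h2
      · exact (hstep b).trans (ih (by omega))
      · have : a = b + 1 := by omega
        subst this
        exact subset_rfl
  have hlen : ∀ k, m + k ≤ (c k).1.length := fun k =>
    (T_good f hf α hα hroot (m+k) (c k).1 (c k).2).2
  have hcoh : ∀ a b, a ≤ b → ∀ i < (c a).1.length,
      (c b).1.getD i 0 = (c a).1.getD i 0 := by
    intro a b hab i hi
    have hz : (fun i => (c b).1.getD i 0) ∈ cyl (c a).1 :=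
      hchain a b hab (mem_cyl_getD _)
    exact hz i hi
  set y : ℕ → ℕ := fun i => (c (i+1)).1.getD i 0 with hy
  have hycyl : ∀ k, y ∈ cyl (c k).1 := by
    intro k i hi
    rcases le_or_gt (i+1) k with h1 | h2
    · exact (hcoh (i+1) k h1 i (by have := hlen (i+1); omega)).symm
    · exact hcoh k (i+1) (by omega) i hi
  refine ⟨y, ?_, ?_⟩
  · intro m''
    rcases le_or_gt m'' m with h1 | h2
    · obtain ⟨σ'', hσ'', hcyl''⟩ := T_ancestor f hf α hα hroot m σ hσ m'' h1
      exact ⟨σ'', hσ'', hcyl'' (hycyl 0)⟩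
    · have heq : m + (m'' - m) = m'' := by omega
      rw [← heq]
      exact ⟨(c (m'' - m)).1, (c (m'' - m)).2, hycyl (m'' - m)⟩
  · exact hycyl 0

end Tree

section Final
variable {n : ℕ} (f : (ℕ → ℕ) → (Fin n → ℝ)) (hf : Continuous f) (α : ℝ) (hα : 0 < α)

lemma Ybr_closed : IsClosed (Ybr f hf α hα) := by
  have heq : Ybr f hf α hα = ⋂ m, ⋃ σ ∈ T f hf α hα m, cyl σ := by
    ext y
    simp only [Ybr, Set.mem_setOf_eq, Set.mem_iInter, Set.mem_iUnion]
    constructor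
    · intro h m
      obtain ⟨σ, hσ, hc⟩ := h m
      exact ⟨σ, hσ, hc⟩
    · intro h m
      obtain ⟨σ, hσ, hc⟩ := h m
      exact ⟨σ, hσ, hc⟩
  rw [heq]
  exact isClosed_iInter fun m =>
    (T f hf α hα m).finite_toSet.isClosed_biUnion fun σ _ => isClosed_cyl σ

set_option maxHeartbeats 1000000 in
lemma Ybr_compact (hroot : good f α []) : IsCompact (Ybr f hf α hα) := by
  have hcomp : IsCompact (Set.univ.pi (fun i : ℕ =>
      (((T f hf α hα (i+1)).image (fun σ => σ.getD i 0) : Finset ℕ) : Set ℕ))) :=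
    isCompact_univ_pi fun i => (Finset.finite_toSet _).isCompact
  apply IsCompact.of_isClosed_subset hcomp (Ybr_closed f hf α hα)
  intro y hy
  rw [Set.mem_univ_pi]
  intro i
  obtain ⟨σ, hσ, hc⟩ := hy (i+1)
  have hlen : i + 1 ≤ σ.length := (T_good f hf α hα hroot (i+1) σ hσ).2
  have : y i = σ.getD i 0 := hc i (by omega)
  rw [this]
  exact Finset.mem_coe.2 (Finset.mem_image.2 ⟨σ, hσ, rfl⟩)

lemma node_bound (hroot : good f α []) :
    ∀ m, ∀ σ ∈ T f hf α hα m,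
      ENNReal.ofReal α ≤ uMDim (f '' (Ybr f hf α hα ∩ cyl σ)) := by
  intro m σ hσ
  apply le_uMDim_of_covN hα.le (by norm_num : (0:ℝ) < 4)
  intro ρ hρ
  obtain ⟨N, hN⟩ := exists_pow_lt_of_lt_one hρ (by norm_num : (1/2:ℝ) < 1)
  set m' := max m N with hm'
  have hhalf : ((1:ℝ)/2)^m' ≤ (1/2)^N :=
    pow_le_pow_of_le_one (by norm_num) (by norm_num) (le_max_right m N)
  obtain ⟨τ', hτ', hcylτ'⟩ := T_descend f hf α hα hroot m σ hσ m' (le_max_left m N)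
  have hg := (T_good f hf α hα hroot m' τ' hτ').1
  have hspec := cD_spec f hf α hα hg m'
  set r := (cD f hf α hα τ' m').1 with hr
  set J := (cD f hf α hα τ' m').2 with hJ
  have hr0 : 0 < r := hspec.1
  have hrρ : r < ρ := lt_of_lt_of_le hspec.2.1 hhalf |>.trans_le hN.le
  refine ⟨r/4, by positivity, by linarith, ?_⟩
  classical
  have hpt : ∀ t : {τ'' // τ'' ∈ J}, ∃ p : Fin n → ℝ,
      p ∈ f '' (Ybr f hf α hα ∩ cyl σ) ∧ p ∈ Aset f t.1 := by
    rintro ⟨τ'', hτ''⟩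
    have hmem : τ'' ∈ T f hf α hα (m'+1) := T_child_mem f hf α hα hτ' hτ''
    obtain ⟨y'', hy''Y, hy''c⟩ := branch_exists f hf α hα hroot (m'+1) τ'' hmem
    have hcyl2 : cyl τ'' ⊆ cyl τ' := (hspec.2.2.2.1 τ'' hτ'').2.1
    exact ⟨f y'', ⟨y'', ⟨hy''Y, hcylτ' (hcyl2 hy''c)⟩, rfl⟩, ⟨y'', hy''c, rfl⟩⟩
  set g : {τ'' // τ'' ∈ J} → (Fin n → ℝ) := fun t => (hpt t).choose with hgdef
  have hgspec : ∀ t, g t ∈ f '' (Ybr f hf α hα ∩ cyl σ) ∧ g t ∈ Aset f t.1 :=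
    fun t => (hpt t).choose_spec
  have hgsep : ∀ t₁ t₂ : {τ'' // τ'' ∈ J}, t₁ ≠ t₂ → r/2 < dist (g t₁) (g t₂) := by
    intro t₁ t₂ hne
    have hne' : t₁.1 ≠ t₂.1 := fun h => hne (Subtype.ext h)
    exact hspec.2.2.2.2 t₁.1 t₁.2 t₂.1 t₂.2 hne' (g t₁) (hgspec t₁).2 (g t₂) (hgspec t₂).2
  have hginj : Function.Injective g := by
    intro t₁ t₂ h
    by_contra hne
    have := hgsep t₁ t₂ hne
    rw [h] at this
    simp at this
    linarith
  set P : Finset (Fin n → ℝ) := J.attach.image g with hP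
  have hPcard : P.card = J.card := by
    rw [hP, Finset.card_image_of_injective _ hginj, Finset.card_attach]
  have hPsub : ↑P ⊆ f '' (Ybr f hf α hα ∩ cyl σ) := by
    intro p hp
    obtain ⟨t, _, rfl⟩ := Finset.mem_image.1 hp
    exact (hgspec t).1
  have hPsep : ∀ p ∈ P, ∀ q ∈ P, p ≠ q → 2 * (r/4) < dist p q := by
    intro p hp q hq hpq
    obtain ⟨t₁, _, rfl⟩ := Finset.mem_image.1 hp
    obtain ⟨t₂, _, rfl⟩ := Finset.mem_image.1 hq
    have hne : t₁ ≠ t₂ := fun h => hpq (congrArg g h)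
    have := hgsep t₁ t₂ hne
    linarith
  have hcov : (P.card : ℕ∞) ≤ covN (f '' (Ybr f hf α hα ∩ cyl σ)) (r/4) :=
    le_covN_of_separated P hPsub (by positivity) hPsep
  by_cases htop : covN (f '' (Ybr f hf α hα ∩ cyl σ)) (r/4) = ⊤
  · exact Or.inl htop
  · right
    have h1 : P.card ≤ (covN (f '' (Ybr f hf α hα ∩ cyl σ)) (r/4)).toNat := by
      have := ENat.toNat_le_toNat hcov htop
      simpa using this
    have h2 : (1/r) ^ α < (P.card : ℝ) := by
      rw [hPcard]
      exact hspec.2.2.1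
    have heq4 : 4 * (r/4) = r := by ring
    rw [heq4]
    calc (1/r) ^ α ≤ (P.card : ℝ) := h2.le
      _ ≤ _ := by exact_mod_cast h1

end Final

lemma key {n : ℕ} (f : (ℕ → ℕ) → (Fin n → ℝ)) (hf : Continuous f) (α : ℝ) (hα : 0 < α)
    (hroot : good f α []) :
    ∃ K : Set (Fin n → ℝ), IsCompact K ∧ K ⊆ Set.range f ∧
      ENNReal.ofReal α ≤ packDim K := by
  set K := f '' Ybr f hf α hα with hK
  have hKc : IsCompact K := (Ybr_compact f hf α hα hroot).image hf
  have hKsub : K ⊆ Set.range f := Set.image_subset_range _ _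
  have hKne : K.Nonempty := by
    obtain ⟨y, hyY, _⟩ := branch_exists f hf α hα hroot 0 [] (by rw [T]; exact Finset.mem_singleton_self [])
    exact ⟨f y, y, hyY, rfl⟩
  refine ⟨K, hKc, hKsub, ?_⟩
  apply baire_packDim hKc hKne
  intro V hV hKV
  obtain ⟨x, hxK, hxV⟩ := hKV
  obtain ⟨ε, hε, hball⟩ := Metric.isOpen_iff.1 hV x hxV
  obtain ⟨y, hyY, rfl⟩ := hxK
  obtain ⟨N, hN⟩ := exists_pow_lt_of_lt_one hε (by norm_num : (1/2:ℝ) < 1)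
  obtain ⟨σ, hσ, hyc⟩ := hyY (N+1)
  have hσT := hσ
  rw [T, Finset.mem_biUnion] at hσ
  obtain ⟨π, hπ, hσc⟩ := hσ
  have hπg := (T_good f hf α hα hroot N π hπ).1
  have hspec := cD_spec f hf α hα hπg N
  set r := (cD f hf α hα π N).1 with hr
  have hr0 : 0 < r := hspec.1
  have hrN : r < (1/2)^N := hspec.2.1
  obtain ⟨_, _, _, x₀, hx₀⟩ := hspec.2.2.2.1 σ hσc
  have hfyA : f y ∈ Aset f σ := ⟨y, hyc, rfl⟩
  have hfyB : dist (f y) x₀ ≤ r/8 := by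
    have := hx₀ hfyA
    rwa [Metric.mem_closedBall] at this
  have hsub : f '' (Ybr f hf α hα ∩ cyl σ) ⊆ K ∩ V := by
    rintro _ ⟨w, ⟨hwY, hwc⟩, rfl⟩
    refine ⟨⟨w, hwY, rfl⟩, hball ?_⟩
    rw [Metric.mem_ball]
    have hwA : f w ∈ Aset f σ := ⟨w, hwc, rfl⟩
    have hwB : dist (f w) x₀ ≤ r/8 := by
      have := hx₀ hwA
      rwa [Metric.mem_closedBall] at this
    calc dist (f w) (f y) ≤ dist (f w) x₀ + dist x₀ (f y) := dist_triangle _ _ _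
      _ = dist (f w) x₀ + dist (f y) x₀ := by rw [dist_comm x₀]
      _ ≤ r/8 + r/8 := add_le_add hwB hfyB
      _ < ε := by linarith [hN, hr0, hrN]
  calc ENNReal.ofReal α ≤ uMDim (f '' (Ybr f hf α hα ∩ cyl σ)) :=
        node_bound f hf α hα hroot (N+1) σ hσT
    _ ≤ uMDim (K ∩ V) := uMDim_mono hsub


theorem stmt18 {n : ℕ} (A : Set (Fin n → ℝ)) (hA : MeasureTheory.AnalyticSet A) :
    packDim A = ⨆ (K : Set (Fin n → ℝ)) (_ : IsCompact K ∧ K ⊆ A), packDim K := by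
  apply le_antisymm
  · apply le_of_forall_lt
    intro c hc
    rw [MeasureTheory.AnalyticSet] at hA
    rcases hA with rfl | ⟨f, hf, rfl⟩
    · rw [packDim_empty] at hc
      exact absurd hc (by simp)
    · have hex : ∃ α : ℝ, 0 < α ∧ c < ENNReal.ofReal α ∧
          ENNReal.ofReal α < packDim (Set.range f) := by
        by_cases htop : packDim (Set.range f) = ⊤
        · have hcne : c ≠ ⊤ := by
            rw [htop] at hc
            exact hc.ne_top
          refine ⟨c.toReal + 1, by positivity, ?_, ?_⟩
          · rw [ENNReal.lt_ofReal_iff_toReal_lt hcne]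
            linarith
          · rw [htop]
            exact ENNReal.ofReal_lt_top
        · obtain ⟨d, hd1, hd2⟩ := exists_between hc
          have hdne : d ≠ ⊤ := by
            intro h
            rw [h] at hd2
            exact htop (top_le_iff.1 hd2.le)
          have hd0 : d ≠ 0 := by
            intro h
            rw [h] at hd1
            exact absurd hd1 (by simp)
          refine ⟨d.toReal, ENNReal.toReal_pos hd0 hdne, ?_, ?_⟩
          · rwa [ENNReal.ofReal_toReal hdne]
          · rwa [ENNReal.ofReal_toReal hdne]
      obtain ⟨α, hα, hcα, hαp⟩ := hex
      have hroot : good f α [] := by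
        rw [good, Aset, cyl_nil, Set.image_univ]
        exact hαp
      obtain ⟨K, hKc, hKsub, hKdim⟩ := key f hf α hα hroot
      calc c < ENNReal.ofReal α := hcα
        _ ≤ packDim K := hKdim
        _ ≤ ⨆ (K : Set (Fin n → ℝ)) (_ : IsCompact K ∧ K ⊆ Set.range f), packDim K :=
            le_iSup₂ (f := fun (K : Set (Fin n → ℝ)) (_ : IsCompact K ∧ K ⊆ Set.range f) =>
              packDim K) K ⟨hKc, hKsub⟩
  · exact iSup₂_le fun K hK => packDim_mono hK.2
end
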